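/- arXiv:2010.13274 — 7 statements merged into one kernel-verified Lean document; each statement's English description precedes it below -/
import Mathlib

section
/- Let n > 3, let G be a group, and let r_1, …, r_n ∈ G satisfy the relations (Rb1)–(Rb8). Define s_0 = r_1 and s_i = r_{i+1} r_1 r_2 r_1 r_{i+1} for i ∈ [1,n-1], and assume the elements s_0, s_1, …, s_{n-1} satisfy the type B Coxeter relations. Then for every k ∈ [1,n], r_k = s_0 (s_1 s_0) (s_2 s_1 s_0) ⋯ (s_{k-1} s_{k-2} ⋯ s_0). -/
/-- The word `s₀ (s₁ s₀) (s₂ s₁ s₀) ⋯ (s_{k-1} s_{k-2} ⋯ s₁ s₀)` in a group. -/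
def rwordB {G : Type*} [Group G] (s : ℕ → G) (k : ℕ) : G :=
  ((List.range k).map (fun j => ((List.range (j + 1)).map (fun i => s (j - i))).prod)).prod

/-- The suffix word `s_j s_{j-1} ⋯ s₀`. -/
private def Tb {G : Type*} [Group G] (s : ℕ → G) (j : ℕ) : G :=
  ((List.range (j + 1)).map (fun i => s (j - i))).prod

private lemma Tb_zero {G : Type*} [Group G] (s : ℕ → G) : Tb s 0 = s 0 := by
  simp [Tb]

private lemma Tb_succ {G : Type*} [Group G] (s : ℕ → G) (k : ℕ) :
    Tb s (k + 1) = s (k + 1) * Tb s k := by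
  rw [Tb, List.range_succ_eq_map]
  simp [Tb, Function.comp_def, Nat.succ_sub_succ]

private lemma rwordB_zero {G : Type*} [Group G] (s : ℕ → G) : rwordB s 0 = 1 := by
  simp [rwordB]

private lemma rwordB_succ {G : Type*} [Group G] (s : ℕ → G) (k : ℕ) :
    rwordB s (k + 1) = rwordB s k * Tb s k := by
  rw [rwordB, List.range_succ]
  simp [rwordB, Tb]

theorem stmt10 (n : ℕ) (hn : 3 < n) (G : Type*) [Group G] (r s : ℕ → G)
    (hRb1 : ∀ k, 1 ≤ k → k ≤ n → r k * r k = 1)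
    (hRb2 : (r 2 * r 3) ^ 6 = 1)
    (hRb3 : ∀ k, 2 ≤ k → k ≤ n → (r 1 * r k) ^ 4 = 1)
    (hRb4 : ∀ k, 4 ≤ k → k ≤ n → (r 1 * r 2 * r 1 * r k) ^ 4 = 1)
    (hRb5 : ∀ k, 3 ≤ k → k ≤ n → (r k * r 1 * r k * r 2) ^ 2 = 1)
    (hRb6 : ∀ k, 2 ≤ k → k ≤ n - 1 →
      r k * r 1 * r 2 * r 1 * r k * r (k + 1) * r 2 * r 3 * r 2 * r 1 * r (k + 1) = 1)
    (hRb7 : ∀ k, 2 ≤ k → k ≤ n - 1 →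
      r (k + 1) * r 1 * r 2 * r 1 * r (k + 1) * r (k - 1) * r k * r (k + 1) * r k = 1)
    (hRb8 : ∀ k l, 2 ≤ k → k ≤ n - 2 → k + 2 ≤ l → l ≤ n →
      r k * r 1 * r 2 * r 1 * r k * r l * r (l - k + 2) * r 1 * r 2 * r 1 * r (l - k + 2) * r l = 1)
    (hs0 : s 0 = r 1)
    (hs : ∀ i, 1 ≤ i → i ≤ n - 1 → s i = r (i + 1) * r 1 * r 2 * r 1 * r (i + 1))
    (hB1 : ∀ i, i ≤ n - 1 → s i * s i = 1)
    (hB2 : (s 0 * s 1) ^ 4 = 1)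
    (hB3 : ∀ i, 1 ≤ i → i ≤ n - 2 → (s i * s (i + 1)) ^ 3 = 1)
    (hB4 : ∀ i j, i ≤ n - 3 → i + 2 ≤ j → j ≤ n - 1 → (s i * s j) ^ 2 = 1) :
    ∀ k, 1 ≤ k → k ≤ n → r k = rwordB s k := by
  have hinv : ∀ m, 1 ≤ m → m ≤ n → (r m)⁻¹ = r m := fun m h1 h2 =>
    inv_eq_of_mul_eq_one_right (hRb1 m h1 h2)
  -- Key claim : Tb s k = r k * r (k+1) for 1 ≤ k ≤ n-1
  have claim : ∀ k, 1 ≤ k → k + 1 ≤ n → Tb s k = r k * r (k + 1) := by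
    intro k
    induction k with
    | zero => intro h; exact absurd h (by norm_num)
    | succ k ih =>
      intro _ h2
      rcases Nat.eq_zero_or_pos k with hk0 | hkpos
      · subst hk0
        rw [Tb_succ, Tb_zero, hs 1 le_rfl (by omega), hs0]
        have h4 : (r 2 * r 1) ^ 4 = 1 := by
          have hc : r 2 * r 1 = (r 1 * r 2)⁻¹ := by
            rw [mul_inv_rev, hinv 1 (by omega) (by omega), hinv 2 (by omega) (by omega)]
          rw [hc, inv_pow, hRb3 2 (by omega) (by omega), inv_one]
        rw [← mul_inv_eq_one, mul_inv_rev, hinv 1 (by omega) (by omega),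
          hinv 2 (by omega) (by omega)]
        simpa [pow_succ, mul_assoc] using h4
      · have h7 := hRb7 (k + 1) (by omega) (by omega)
        rw [Tb_succ, ih hkpos (by omega), hs (k + 1) (by omega) (by omega)]
        rw [← mul_inv_eq_one, mul_inv_rev, hinv (k + 1) (by omega) (by omega),
          hinv (k + 1 + 1) (by omega) (by omega)]
        simp only [Nat.add_sub_cancel] at h7
        simpa [mul_assoc] using h7
  intro k
  induction k with
  | zero => intro h; exact absurd h (by norm_num)
  | succ k ih =>
    intro _ h2
    rcases Nat.eq_zero_or_pos k with hk0 | hkpos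
    · subst hk0
      rw [rwordB_succ, rwordB_zero, Tb_zero, one_mul, hs0]
    · rw [rwordB_succ, ← ih hkpos (by omega), claim k hkpos h2, ← mul_assoc,
        hRb1 k (by omega) (by omega), one_mul]
end

section
/- Let n > 3, let G be a group, let s_0, s_1, …, s_{n-1} ∈ G satisfy the type B Coxeter relations, and define r_ℓ = s_0 (s_1 s_0) (s_2 s_1 s_0) ⋯ (s_{ℓ-1} s_{ℓ-2} ⋯ s_1 s_0) for ℓ ∈ [1,n]. Then for every k ∈ [1,n-2] and every ℓ ∈ [k+1,n], s_k r_ℓ = r_ℓ s_{ℓ-k}. -/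
namespace Stmt12Aux

variable {G : Type*} [Group G]

/-- block `c_j = s_{j-1} ⋯ s_1 s_0`. -/
def blockB (s : ℕ → G) : ℕ → G
  | 0 => 1
  | j + 1 => s j * blockB s j

/-- `rB l = c_1 c_2 ⋯ c_l`. -/
def rB (s : ℕ → G) : ℕ → G
  | 0 => 1
  | l + 1 => rB s l * blockB s (l + 1)

lemma inner_eq (s : ℕ → G) :
    ∀ j, ((List.range (j + 1)).map (fun i => s (j - i))).prod = blockB s (j + 1) := by
  intro j
  induction j with
  | zero => simp [blockB]
  | succ j ih =>
      rw [List.range_succ_eq_map]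
      simp only [List.map_cons, List.map_map, List.prod_cons, Nat.sub_zero]
      have h : (List.range (j + 1)).map ((fun i => s (j + 1 - i)) ∘ Nat.succ)
          = (List.range (j + 1)).map (fun i => s (j - i)) := by
        apply List.map_congr_left
        intro a _
        simp [Function.comp, Nat.succ_sub_succ]
      rw [h, ih]
      rfl

lemma rword_eq (s : ℕ → G) : ∀ l, rwordB s l = rB s l := by
  intro l
  induction l with
  | zero => simp [rwordB, rB]
  | succ l ih =>
      rw [rwordB, List.range_succ, List.map_append, List.prod_append]
      rw [show ((List.range l).map
        (fun j => ((List.range (j + 1)).map (fun i => s (j - i))).prod)).prod = rwordB s l from rfl]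
      simp only [List.map_cons, List.map_nil, List.prod_cons, List.prod_nil, mul_one]
      rw [ih, inner_eq]
      rfl

variable {s : ℕ → G} {n : ℕ}

lemma comm_block (hcomm : ∀ i j (x : G), i + 2 ≤ j → j ≤ n - 1 → s i * (s j * x) = s j * (s i * x)) :
    ∀ j k, j + 1 ≤ k → k ≤ n - 1 → ∀ x : G,
      s k * (blockB s j * x) = blockB s j * (s k * x) := by
  intro j
  induction j with
  | zero => intro k _ _ x; simp [blockB]
  | succ j ih =>
      intro k hjk hkn x
      simp only [blockB, mul_assoc]
      rw [← hcomm j k (blockB s j * x) (by omega) hkn, ih k (by omega) hkn x]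

lemma comm_rB (hcomm : ∀ i j (x : G), i + 2 ≤ j → j ≤ n - 1 → s i * (s j * x) = s j * (s i * x)) :
    ∀ j k, j + 1 ≤ k → k ≤ n - 1 → ∀ x : G,
      s k * (rB s j * x) = rB s j * (s k * x) := by
  intro j
  induction j with
  | zero => intro k _ _ x; simp [rB]
  | succ j ih =>
      intro k hjk hkn x
      simp only [rB, mul_assoc]
      rw [ih k (by omega) hkn, comm_block hcomm (j + 1) k (by omega) hkn x]

lemma shift
    (hcomm : ∀ i j (x : G), i + 2 ≤ j → j ≤ n - 1 → s i * (s j * x) = s j * (s i * x))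
    (hbraid : ∀ i (x : G), 1 ≤ i → i + 2 ≤ n →
      s i * (s (i + 1) * (s i * x)) = s (i + 1) * (s i * (s (i + 1) * x))) :
    ∀ j k, 1 ≤ k → k + 2 ≤ j → j ≤ n → ∀ x : G,
      s k * (blockB s j * x) = blockB s j * (s (k + 1) * x) := by
  intro j
  induction j with
  | zero => intro k _ h _ _; omega
  | succ j ih =>
      intro k hk hkj hjn x
      rcases eq_or_lt_of_le hkj with heq | hlt
      · obtain rfl : j = k + 1 := by omega
        simp only [blockB, mul_assoc]
        rw [hbraid k (blockB s k * x) hk (by omega)]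
        rw [comm_block hcomm k (k + 1) (by omega) (by omega) x]
      · simp only [blockB, mul_assoc]
        rw [hcomm k j (blockB s j * x) (by omega) (by omega)]
        rw [ih k hk (by omega) (by omega) x]

lemma baseB
    (hcomm : ∀ i j (x : G), i + 2 ≤ j → j ≤ n - 1 → s i * (s j * x) = s j * (s i * x))
    (hbraid : ∀ i (x : G), 1 ≤ i → i + 2 ≤ n →
      s i * (s (i + 1) * (s i * x)) = s (i + 1) * (s i * (s (i + 1) * x)))
    (h2 : ∀ x : G, s 1 * (s 0 * (s 1 * (s 0 * x))) = s 0 * (s 1 * (s 0 * (s 1 * x)))) :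
    ∀ k, 1 ≤ k → k + 1 ≤ n → ∀ x : G,
      s k * (blockB s k * (blockB s (k + 1) * x))
        = blockB s k * (blockB s (k + 1) * (s 1 * x)) := by
  intro k
  induction k with
  | zero => intro h _ _; omega
  | succ k ih =>
      intro hk1 hkn x
      rcases Nat.eq_zero_or_pos k with rfl | hk
      · simp only [blockB, mul_assoc, one_mul, mul_one]
        exact h2 x
      · have ih' := ih hk (by omega) x
        simp only [blockB, mul_assoc] at ih' ⊢
        rw [← comm_block hcomm k (k + 1) (by omega) (by omega) (s k * (blockB s k * x))]
        rw [← hbraid k (blockB s k * (s k * (blockB s k * x))) hk (by omega)]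
        rw [ih']
        rw [comm_block hcomm k (k + 1) (by omega) (by omega) (s k * (blockB s k * (s 1 * x)))]

lemma main
    (hcomm : ∀ i j (x : G), i + 2 ≤ j → j ≤ n - 1 → s i * (s j * x) = s j * (s i * x))
    (hbraid : ∀ i (x : G), 1 ≤ i → i + 2 ≤ n →
      s i * (s (i + 1) * (s i * x)) = s (i + 1) * (s i * (s (i + 1) * x)))
    (h2 : ∀ x : G, s 1 * (s 0 * (s 1 * (s 0 * x))) = s 0 * (s 1 * (s 0 * (s 1 * x)))) :
    ∀ k l, 1 ≤ k → k + 1 ≤ l → l ≤ n → ∀ x : G,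
      s k * (rB s l * x) = rB s l * (s (l - k) * x) := by
  intro k l hk hkl
  induction l, hkl using Nat.le_induction with
  | base =>
      intro hln x
      obtain ⟨k', rfl⟩ : ∃ k', k = k' + 1 := ⟨k - 1, by omega⟩
      rw [show k' + 1 + 1 - (k' + 1) = 1 from by omega]
      simp only [rB, mul_assoc]
      rw [comm_rB hcomm k' (k' + 1) (by omega) (by omega)]
      rw [baseB hcomm hbraid h2 (k' + 1) (by omega) (by omega) x]
  | succ l hl ih =>
      intro hln x
      simp only [rB, mul_assoc]
      rw [ih (by omega)]
      rw [shift hcomm hbraid (l + 1) (l - k) (by omega) (by omega) (by omega) x]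
      rw [show l - k + 1 = l + 1 - k from by omega]

end Stmt12Aux

theorem stmt12 (n : ℕ) (hn : 3 < n) (G : Type*) [Group G] (s : ℕ → G)
    (hB1 : ∀ i, i ≤ n - 1 → s i * s i = 1)
    (hB2 : (s 0 * s 1) ^ 4 = 1)
    (hB3 : ∀ i, 1 ≤ i → i ≤ n - 2 → (s i * s (i + 1)) ^ 3 = 1)
    (hB4 : ∀ i j, i ≤ n - 3 → i + 2 ≤ j → j ≤ n - 1 → (s i * s j) ^ 2 = 1) :
    ∀ k l, 1 ≤ k → k ≤ n - 2 → k + 1 ≤ l → l ≤ n →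
      s k * rwordB s l = rwordB s l * s (l - k) := by
  have hs : ∀ i, i ≤ n - 1 → (s i)⁻¹ = s i := fun i hi => inv_eq_of_mul_eq_one_left (hB1 i hi)
  have hcomm : ∀ i j (x : G), i + 2 ≤ j → j ≤ n - 1 →
      s i * (s j * x) = s j * (s i * x) := by
    intro i j x hij hj
    have h := hB4 i j (by omega) hij hj
    rw [pow_two] at h
    have h2 : (s i * s j)⁻¹ = s i * s j := inv_eq_of_mul_eq_one_left h
    have h3 : s j * s i = s i * s j := by
      rw [← h2, mul_inv_rev, hs i (by omega), hs j hj]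
    rw [← mul_assoc, ← h3, mul_assoc]
  have hbraid : ∀ i (x : G), 1 ≤ i → i + 2 ≤ n →
      s i * (s (i + 1) * (s i * x)) = s (i + 1) * (s i * (s (i + 1) * x)) := by
    intro i x h1 h2
    have h := hB3 i h1 (by omega)
    have e : (s i * s (i + 1) * s i) * (s (i + 1) * s i * s (i + 1)) = 1 := by
      rw [show (s i * s (i + 1) * s i) * (s (i + 1) * s i * s (i + 1))
        = (s i * s (i + 1)) ^ 3 from by
          rw [pow_succ, pow_succ, pow_one]; simp only [mul_assoc]]
      exact h
    have e2 : s i * s (i + 1) * s i = (s (i + 1) * s i * s (i + 1))⁻¹ :=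
      eq_inv_of_mul_eq_one_left e
    have key : s i * s (i + 1) * s i = s (i + 1) * s i * s (i + 1) := by
      rw [e2, mul_inv_rev, mul_inv_rev, hs i (by omega), hs (i + 1) (by omega)]
      simp [mul_assoc]
    simp only [← mul_assoc]
    rw [key]
  have h2' : ∀ x : G, s 1 * (s 0 * (s 1 * (s 0 * x))) = s 0 * (s 1 * (s 0 * (s 1 * x))) := by
    intro x
    have e : (s 0 * s 1 * s 0 * s 1) * (s 0 * s 1 * s 0 * s 1) = 1 := by
      rw [show (s 0 * s 1 * s 0 * s 1) * (s 0 * s 1 * s 0 * s 1)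
        = (s 0 * s 1) ^ 4 from by
          rw [pow_succ, pow_succ, pow_succ, pow_one]; simp only [mul_assoc]]
      exact hB2
    have e2 : (s 0 * s 1 * s 0 * s 1)⁻¹ = s 0 * s 1 * s 0 * s 1 :=
      inv_eq_of_mul_eq_one_left e
    have key2 : s 1 * s 0 * s 1 * s 0 = s 0 * s 1 * s 0 * s 1 := by
      calc s 1 * s 0 * s 1 * s 0 = (s 0 * s 1 * s 0 * s 1)⁻¹ := by
            simp [mul_inv_rev, hs 0 (by omega), hs 1 (by omega), mul_assoc]
        _ = s 0 * s 1 * s 0 * s 1 := e2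
    simp only [← mul_assoc]
    rw [key2]
  intro k l hk hk2 hkl hln
  have h := Stmt12Aux.main hcomm hbraid h2' k l hk hkl hln 1
  rw [Stmt12Aux.rword_eq]
  simpa using h
end

section
/- Let n > 3, let G be a group, and let r_2, …, r_n ∈ G satisfy the relations (R1)–(R6). Then the elements s_i := r_{i+1} r_2 r_{i+1} for i ∈ [1,n-1] satisfy the type A Coxeter relations: s_i^2 = 1 for i ∈ [1,n-1]; (s_i s_{i+1})^3 = 1 for i ∈ [1,n-2]; and (s_i s_j)^2 = 1 for i ∈ [1,n-3] and j ∈ [i+2,n-1]. -/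
private lemma eq_of_mul_invol {G : Type*} [Group G] {A B : G}
    (hAB : A * B = 1) (hB : B * B = 1) : A = B := by
  calc A = A * (B * B) := by rw [hB, mul_one]
  _ = (A * B) * B := (mul_assoc _ _ _).symm
  _ = B := by rw [hAB, one_mul]

private lemma conj_pow_one {G : Type*} [Group G] (x w : G) (hx : x * x = 1)
    (m : ℕ) (h : w ^ m = 1) : (x * w * x) ^ m = 1 := by
  have hinv : x⁻¹ = x := inv_eq_of_mul_eq_one_right hx
  have e : ∀ p : ℕ, (x * w * x) ^ p = x * w ^ p * x⁻¹ := by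
    intro p
    induction p with
    | zero => simp [hinv, ← hx]
    | succ q ih =>
        rw [pow_succ, ih, pow_succ, hinv]
        calc x * w ^ q * x * (x * w * x) = x * w ^ q * (x * x) * w * x := by group
        _ = x * (w ^ q * w) * x := by rw [hx]; group
  rw [e m, h, mul_one, hinv, hx]

theorem stmt13 (n : ℕ) (hn : 3 < n) (G : Type*) [Group G] (r : ℕ → G)
    (hR1 : ∀ k, 2 ≤ k → k ≤ n → r k * r k = 1)
    (hR2 : (r 2 * r 3) ^ 3 = 1)
    (hR3 : ∀ k, 4 ≤ k → k ≤ n → (r 2 * r k) ^ 4 = 1)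
    (hR4 : ∀ l k, 4 ≤ l → l ≤ n → 3 ≤ k → k ≤ l - 1 →
      r l * r (l - k + 2) * r 2 * r (l - k + 2) * r l * r k * r 2 * r k = 1)
    (hR5 : ∀ k, 3 ≤ k → k ≤ n - 1 →
      r k * r (k - 1) * r (k + 1) * r 2 * r (k + 1) * r k * r (k + 1) = 1)
    (hR6 : ∀ k, 3 ≤ k → k ≤ n - 1 →
      (r k * r (k - 1)) ^ 2 * r (k + 1) * r 3 * r (k + 1) * r (k - 1) * r (k + 1) = 1) :
    (∀ i, 1 ≤ i → i ≤ n - 1 →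
      (r (i + 1) * r 2 * r (i + 1)) * (r (i + 1) * r 2 * r (i + 1)) = 1) ∧
    (∀ i, 1 ≤ i → i ≤ n - 2 →
      ((r (i + 1) * r 2 * r (i + 1)) * (r (i + 2) * r 2 * r (i + 2))) ^ 3 = 1) ∧
    (∀ i j, 1 ≤ i → i ≤ n - 3 → i + 2 ≤ j → j ≤ n - 1 →
      ((r (i + 1) * r 2 * r (i + 1)) * (r (j + 1) * r 2 * r (j + 1))) ^ 2 = 1) := by
  have h2 : r 2 * r 2 = 1 := hR1 2 (by omega) (by omega)
  have h3 : r 3 * r 3 = 1 := hR1 3 (by omega) (by omega)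
  have h3inv : (r 3)⁻¹ = r 3 := inv_eq_of_mul_eq_one_right h3
  have hw32 : (r 3 * r 2) ^ 3 = 1 := by
    have e : (r 3 * r 2) ^ 3 = r 3 * (r 2 * r 3) ^ 3 * (r 3)⁻¹ := by
      simp only [pow_succ, pow_zero, one_mul]; group
    rw [e, hR2, mul_one, h3inv, h3]
  refine ⟨?_, ?_, ?_⟩
  · intro i hi1 hi2
    have hx : r (i + 1) * r (i + 1) = 1 := hR1 _ (by omega) (by omega)
    have := conj_pow_one (r (i+1)) (r 2) hx 2 (by rw [pow_two, h2])
    rwa [pow_two] at this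
  · intro i hi1 hi2
    obtain rfl | hi2' := eq_or_lt_of_le hi1
    · rw [show (1:ℕ) + 1 = 2 from rfl, show (1:ℕ) + 2 = 3 from rfl]
      have e1 : r 2 * r 2 * r 2 = r 2 := by rw [h2, one_mul]
      rw [e1]
      have e2 : (r 2 * (r 3 * r 2 * r 3)) ^ 3 = ((r 2 * r 3) ^ 3) ^ 2 := by
        simp only [pow_succ, pow_zero, one_mul]; group
      rw [e2, hR2, one_pow]
    · have hd : r (i + 2) * r (i + 2) = 1 := hR1 _ (by omega) (by omega)
      have h := hR4 (i + 2) (i + 1) (by omega) (by omega) (by omega) (by omega)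
      rw [show i + 2 - (i + 1) + 2 = 3 by omega] at h
      have hB : (r (i+1) * r 2 * r (i+1)) * (r (i+1) * r 2 * r (i+1)) = 1 := by
        have hx : r (i + 1) * r (i + 1) = 1 := hR1 _ (by omega) (by omega)
        have := conj_pow_one (r (i+1)) (r 2) hx 2 (by rw [pow_two, h2])
        rwa [pow_two] at this
      have hAB : (r (i+2) * (r 3 * r 2 * r 3) * r (i+2)) * (r (i+1) * r 2 * r (i+1)) = 1 := by
        rw [← h]; group
      have E := eq_of_mul_invol hAB hB
      rw [← E]
      have e : (r (i+2) * (r 3 * r 2 * r 3) * r (i+2)) * (r (i+2) * r 2 * r (i+2))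
          = r (i+2) * ((r 3 * r 2 * r 3) * (r (i+2) * r (i+2)) * r 2) * r (i+2) := by group
      rw [e, hd, mul_one]
      refine conj_pow_one _ _ hd 3 ?_
      have e2 : (r 3 * r 2 * r 3 * r 2) ^ 3 = ((r 3 * r 2) ^ 3) ^ 2 := by
        simp only [pow_succ, pow_zero, one_mul]; group
      rw [e2, hw32, one_pow]
  · intro i j hi1 hi3 hij hj
    obtain rfl | hi2' := eq_or_lt_of_le hi1
    · rw [show (1:ℕ) + 1 = 2 from rfl]
      have e1 : r 2 * r 2 * r 2 = r 2 := by rw [h2, one_mul]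
      rw [e1]
      have h4 := hR3 (j + 1) (by omega) (by omega)
      have e2 : (r 2 * (r (j+1) * r 2 * r (j+1))) ^ 2 = (r 2 * r (j+1)) ^ 4 := by
        simp only [pow_succ, pow_zero, one_mul]; group
      rw [e2, h4]
    · have hq : r (j + 1) * r (j + 1) = 1 := hR1 _ (by omega) (by omega)
      have hkk : r (j - i + 2) * r (j - i + 2) = 1 := hR1 _ (by omega) (by omega)
      have hkinv : (r (j - i + 2))⁻¹ = r (j - i + 2) := inv_eq_of_mul_eq_one_right hkk
      have h := hR4 (j + 1) (j - i + 2) (by omega) (by omega) (by omega) (by omega)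
      rw [show j + 1 - (j - i + 2) + 2 = i + 1 by omega] at h
      have hB : (r (j-i+2) * r 2 * r (j-i+2)) * (r (j-i+2) * r 2 * r (j-i+2)) = 1 := by
        have := conj_pow_one (r (j-i+2)) (r 2) hkk 2 (by rw [pow_two, h2])
        rwa [pow_two] at this
      have hAB : (r (j+1) * (r (i+1) * r 2 * r (i+1)) * r (j+1))
          * (r (j-i+2) * r 2 * r (j-i+2)) = 1 := by
        rw [← h]; group
      have E := eq_of_mul_invol hAB hB
      have E2 : r (i+1) * r 2 * r (i+1)
          = r (j+1) * (r (j-i+2) * r 2 * r (j-i+2)) * r (j+1) := by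
        rw [← E]
        calc r (i+1) * r 2 * r (i+1)
            = (r (j+1) * r (j+1)) * (r (i+1) * r 2 * r (i+1)) * (r (j+1) * r (j+1)) := by
              rw [hq, one_mul, mul_one]
          _ = r (j+1) * (r (j+1) * (r (i+1) * r 2 * r (i+1)) * r (j+1)) * r (j+1) := by group
      rw [E2]
      have e : (r (j+1) * (r (j-i+2) * r 2 * r (j-i+2)) * r (j+1)) * (r (j+1) * r 2 * r (j+1))
          = r (j+1) * ((r (j-i+2) * r 2 * r (j-i+2)) * (r (j+1) * r (j+1)) * r 2) * r (j+1) := by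
        group
      rw [e, hq, mul_one]
      refine conj_pow_one _ _ hq 2 ?_
      have h4 := hR3 (j - i + 2) (by omega) (by omega)
      have e2 : (r (j-i+2) * r 2 * r (j-i+2) * r 2) ^ 2
          = r (j-i+2) * (r 2 * r (j-i+2)) ^ 4 * (r (j-i+2))⁻¹ := by
        simp only [pow_succ, pow_zero, one_mul]; group
      rw [e2, h4, mul_one, hkinv, hkk]
end

section
/- Let n > 3, let G be a group, let s_1, …, s_{n-1} ∈ G satisfy the type A Coxeter relations, and define r_k = s_1 (s_2 s_1) (s_3 s_2 s_1) ⋯ (s_{k-1} s_{k-2} ⋯ s_2 s_1) for k ∈ [2,n]. Then the elements r_2, …, r_n satisfy the relations (R1)–(R6). -/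
/-- The word `s₁ (s₂ s₁) (s₃ s₂ s₁) ⋯ (s_{k-1} s_{k-2} ⋯ s₂ s₁)` in a group. -/
def rwordA {G : Type*} [Group G] (s : ℕ → G) (k : ℕ) : G :=
  ((List.range (k - 1)).map (fun j => ((List.range (j + 1)).map (fun i => s (j + 1 - i))).prod)).prod


namespace RwordAux

variable {G : Type*} [Group G]

/-- ascending run `s a * s (a+1) * ⋯ * s (a+m-1)` -/
def upA (s : ℕ → G) (a m : ℕ) : G := ((List.range m).map (fun t => s (a + t))).prod

/-- descending run `s (a+m-1) * ⋯ * s a` -/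
def dnA (s : ℕ → G) (a m : ℕ) : G := ((List.range m).map (fun t => s (a + m - 1 - t))).prod

@[simp] lemma upA_zero (s : ℕ → G) (a : ℕ) : upA s a 0 = 1 := rfl
@[simp] lemma dnA_zero (s : ℕ → G) (a : ℕ) : dnA s a 0 = 1 := rfl

lemma upA_succ (s : ℕ → G) (a m : ℕ) : upA s a (m + 1) = upA s a m * s (a + m) := by
  simp [upA, List.range_succ]

lemma upA_succ' (s : ℕ → G) (a m : ℕ) : upA s a (m + 1) = s a * upA s (a + 1) m := by
  rw [upA, List.range_succ_eq_map]
  simp only [List.map_cons, List.prod_cons, List.map_map]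
  rw [upA]
  refine congrArg₂ (· * ·) (by norm_num) ?_
  refine congrArg List.prod (List.map_congr_left (fun t _ => ?_))
  simp only [Function.comp_apply]
  congr 1
  omega

lemma dnA_succ (s : ℕ → G) (a m : ℕ) : dnA s a (m + 1) = s (a + m) * dnA s a m := by
  rw [dnA, List.range_succ_eq_map]
  simp only [List.map_cons, List.prod_cons, List.map_map]
  refine congrArg₂ (· * ·) (by norm_num) ?_
  rw [dnA]
  refine congrArg List.prod (List.map_congr_left (fun t _ => ?_))
  simp only [Function.comp_apply]
  congr 1
  omega

lemma dnA_succ' (s : ℕ → G) (a m : ℕ) : dnA s a (m + 1) = dnA s (a + 1) m * s a := by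
  rw [dnA, List.range_succ]
  simp only [List.map_append, List.prod_append, List.map_cons, List.prod_cons, List.map_nil,
    List.prod_nil]
  rw [mul_one]
  refine congrArg₂ (· * ·) ?_ (by congr 1; omega)
  rw [dnA]
  refine congrArg List.prod (List.map_congr_left (fun t _ => ?_))
  congr 1
  omega

lemma rwordA_succ (s : ℕ → G) (k : ℕ) : rwordA s (k + 1) = rwordA s k * dnA s 1 k := by
  cases k with
  | zero => simp [rwordA, dnA]
  | succ j =>
    rw [rwordA, rwordA]
    simp only [Nat.add_sub_cancel]
    rw [List.range_succ]
    simp only [List.map_append, List.prod_append, List.map_cons, List.map_nil, List.prod_cons,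
      List.prod_nil, mul_one]
    refine congrArg₂ (· * ·) rfl ?_
    rw [dnA]
    refine congrArg List.prod (List.map_congr_left (fun i _ => ?_))
    congr 1
    omega

lemma rwordA_one (s : ℕ → G) : rwordA s 1 = 1 := by simp [rwordA]

lemma rwordA_two (s : ℕ → G) : rwordA s 2 = s 1 := by
  have h := rwordA_succ s 1
  rw [rwordA_one, one_mul] at h
  rw [h, dnA]
  simp [List.range_succ]

lemma rwordA_three (s : ℕ → G) : rwordA s 3 = s 1 * (s 2 * s 1) := by
  have h := rwordA_succ s 2
  rw [rwordA_two] at h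
  rw [h, dnA]
  simp [List.range_succ, mul_assoc]

end RwordAux

namespace RwordAux

variable {G : Type*} [Group G]

lemma dn_mul_up (s : ℕ → G) (n : ℕ)
    (hsq : ∀ i, 1 ≤ i → i ≤ n - 1 → s i * s i = 1) :
    ∀ m a, 1 ≤ a → a + m ≤ n → dnA s a m * upA s a m = 1 := by
  intro m
  induction m with
  | zero => intro a _ _; simp
  | succ m ih =>
    intro a ha hmn
    have h1 : dnA s a m * upA s a m = 1 := ih a ha (by omega)
    have h2 : s (a + m) * s (a + m) = 1 := hsq _ (by omega) (by omega)
    calc dnA s a (m + 1) * upA s a (m + 1)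
        = (s (a + m) * dnA s a m) * (upA s a m * s (a + m)) := by rw [dnA_succ, upA_succ]
      _ = s (a + m) * ((dnA s a m * upA s a m) * s (a + m)) := by group
      _ = s (a + m) * s (a + m) := by rw [h1, one_mul]
      _ = 1 := h2

lemma up_mul_dn (s : ℕ → G) (n : ℕ)
    (hsq : ∀ i, 1 ≤ i → i ≤ n - 1 → s i * s i = 1) :
    ∀ m a, 1 ≤ a → a + m ≤ n → upA s a m * dnA s a m = 1 := by
  intro m
  induction m with
  | zero => intro a _ _; simp
  | succ m ih =>
    intro a ha hmn
    have h1 : upA s a m * dnA s a m = 1 := ih a ha (by omega)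
    have h2 : s (a + m) * s (a + m) = 1 := hsq _ (by omega) (by omega)
    calc upA s a (m + 1) * dnA s a (m + 1)
        = (upA s a m * s (a + m)) * (s (a + m) * dnA s a m) := by rw [dnA_succ, upA_succ]
      _ = upA s a m * ((s (a + m) * s (a + m)) * dnA s a m) := by group
      _ = upA s a m * dnA s a m := by rw [h2, one_mul]
      _ = 1 := h1

lemma comm_dn (s : ℕ → G) (n : ℕ)
    (hcm : ∀ i j, 1 ≤ i → i + 2 ≤ j → j ≤ n - 1 → s i * s j = s j * s i) :
    ∀ m a p, 1 ≤ a → a + m + 1 ≤ p → p ≤ n - 1 → s p * dnA s a m = dnA s a m * s p := by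
  intro m
  induction m with
  | zero => intro a p _ _ _; simp
  | succ m ih =>
    intro a p ha hp hpn
    have h1 : s (a + m) * s p = s p * s (a + m) := hcm _ _ (by omega) (by omega) hpn
    calc s p * dnA s a (m + 1)
        = s p * (s (a + m) * dnA s a m) := by rw [dnA_succ]
      _ = (s p * s (a + m)) * dnA s a m := by group
      _ = s (a + m) * (s p * dnA s a m) := by rw [← h1]; group
      _ = s (a + m) * (dnA s a m * s p) := by rw [ih a p ha (by omega) hpn]
      _ = dnA s a (m + 1) * s p := by rw [dnA_succ]; group

lemma comm_r (s : ℕ → G) (n : ℕ)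
    (hcm : ∀ i j, 1 ≤ i → i + 2 ≤ j → j ≤ n - 1 → s i * s j = s j * s i) :
    ∀ j p, j + 1 ≤ p → p ≤ n - 1 → s p * rwordA s j = rwordA s j * s p := by
  intro j
  induction j with
  | zero => intro p _ _; simp [rwordA]
  | succ j ih =>
    intro p hp hpn
    have h1 : s p * dnA s 1 j = dnA s 1 j * s p :=
      comm_dn s n hcm j 1 p (by omega) (by omega) hpn
    calc s p * rwordA s (j + 1)
        = s p * (rwordA s j * dnA s 1 j) := by rw [rwordA_succ]
      _ = (s p * rwordA s j) * dnA s 1 j := by group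
      _ = (rwordA s j * s p) * dnA s 1 j := by rw [ih p (by omega) hpn]
      _ = rwordA s j * (s p * dnA s 1 j) := by group
      _ = rwordA s j * (dnA s 1 j * s p) := by rw [h1]
      _ = rwordA s (j + 1) * s p := by rw [rwordA_succ]; group

lemma shift_dn (s : ℕ → G) (n : ℕ)
    (hbr : ∀ i, 1 ≤ i → i + 1 ≤ n - 1 → s i * s (i + 1) * s i = s (i + 1) * s i * s (i + 1))
    (hcm : ∀ i j, 1 ≤ i → i + 2 ≤ j → j ≤ n - 1 → s i * s j = s j * s i) :
    ∀ j, 1 ≤ j → ∀ k, j + 1 ≤ k → k ≤ n - 1 → s j * dnA s 1 k = dnA s 1 k * s (j + 1) := by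
  intro j hj k hk
  induction k, hk using Nat.le_induction with
  | base =>
    intro hn1
    obtain ⟨t, rfl⟩ : ∃ t, j = t + 1 := ⟨j - 1, by omega⟩
    have e1 : dnA s 1 (t + 2) = s (t + 2) * dnA s 1 (t + 1) := by
      have h := dnA_succ s 1 (t + 1)
      rw [show (1 : ℕ) + (t + 1) = t + 2 by omega] at h
      exact h
    have e2 : dnA s 1 (t + 1) = s (t + 1) * dnA s 1 t := by
      have h := dnA_succ s 1 t
      rw [show (1 : ℕ) + t = t + 1 by omega] at h
      exact h
    have hbr' : s (t + 1) * s (t + 2) * s (t + 1) = s (t + 2) * s (t + 1) * s (t + 2) := by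
      have := hbr (t + 1) (by omega) (by omega)
      convert this using 3 <;> omega
    have hcd : s (t + 2) * dnA s 1 t = dnA s 1 t * s (t + 2) :=
      comm_dn s n hcm t 1 (t + 2) (by omega) (by omega) (by omega)
    calc s (t + 1) * dnA s 1 (t + 1 + 1)
        = s (t + 1) * (s (t + 2) * (s (t + 1) * dnA s 1 t)) := by
          rw [show t + 1 + 1 = t + 2 from rfl, e1, e2]
      _ = (s (t + 1) * s (t + 2) * s (t + 1)) * dnA s 1 t := by group
      _ = (s (t + 2) * s (t + 1) * s (t + 2)) * dnA s 1 t := by rw [hbr']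
      _ = s (t + 2) * s (t + 1) * (s (t + 2) * dnA s 1 t) := by group
      _ = s (t + 2) * s (t + 1) * (dnA s 1 t * s (t + 2)) := by rw [hcd]
      _ = (s (t + 2) * (s (t + 1) * dnA s 1 t)) * s (t + 2) := by group
      _ = dnA s 1 (t + 1 + 1) * s (t + 2) := by rw [← e2, ← e1]
      _ = dnA s 1 (t + 1 + 1) * s (t + 1 + 1) := by norm_num
  | succ k hk ih =>
    intro hkn
    have h1 : s j * s (k + 1) = s (k + 1) * s j := hcm _ _ hj (by omega) hkn
    have e1 : dnA s 1 (k + 1) = s (k + 1) * dnA s 1 k := by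
      have h := dnA_succ s 1 k
      rw [show (1 : ℕ) + k = k + 1 by omega] at h
      exact h
    calc s j * dnA s 1 (k + 1)
        = s j * (s (k + 1) * dnA s 1 k) := by rw [e1]
      _ = (s j * s (k + 1)) * dnA s 1 k := by group
      _ = s (k + 1) * (s j * dnA s 1 k) := by rw [h1]; group
      _ = s (k + 1) * (dnA s 1 k * s (j + 1)) := by rw [ih (by omega)]
      _ = dnA s 1 (k + 1) * s (j + 1) := by rw [e1]; group

lemma updn_shift (s : ℕ → G) (n : ℕ)
    (hsq : ∀ i, 1 ≤ i → i ≤ n - 1 → s i * s i = 1)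
    (hbr : ∀ i, 1 ≤ i → i + 1 ≤ n - 1 → s i * s (i + 1) * s i = s (i + 1) * s i * s (i + 1))
    (hcm : ∀ i j, 1 ≤ i → i + 2 ≤ j → j ≤ n - 1 → s i * s j = s j * s i)
    (j k : ℕ) (hj : 1 ≤ j) (hjk : j + 1 ≤ k) (hkn : k ≤ n - 1) :
    upA s 1 k * s j * dnA s 1 k = s (j + 1) := by
  calc upA s 1 k * s j * dnA s 1 k
      = upA s 1 k * (s j * dnA s 1 k) := by group
    _ = upA s 1 k * (dnA s 1 k * s (j + 1)) := by rw [shift_dn s n hbr hcm j hj k hjk hkn]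
    _ = (upA s 1 k * dnA s 1 k) * s (j + 1) := by group
    _ = s (j + 1) := by rw [up_mul_dn s n hsq k 1 (by omega) (by omega), one_mul]

lemma conj_dn (s : ℕ → G) (r : G) (K : ℕ) (hr2 : r * r = 1)
    (hc : ∀ i, 1 ≤ i → i + 1 ≤ K → r * s i * r = s (K - i)) :
    ∀ m, m + 1 ≤ K → r * dnA s 1 m * r = upA s (K - m) m := by
  intro m
  induction m with
  | zero => intro _; rw [dnA_zero, mul_one, hr2, upA_zero]
  | succ m ih =>
    intro hm
    have e1 : dnA s 1 (m + 1) = s (m + 1) * dnA s 1 m := by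
      have h := dnA_succ s 1 m
      rw [show (1 : ℕ) + m = m + 1 by omega] at h
      exact h
    calc r * dnA s 1 (m + 1) * r
        = r * (s (m + 1) * dnA s 1 m) * r := by rw [e1]
      _ = (r * s (m + 1) * r) * (r * dnA s 1 m * r) := by
          rw [show (r * s (m + 1) * r) * (r * dnA s 1 m * r)
              = r * s (m + 1) * ((r * r) * (dnA s 1 m * r)) by group, hr2]
          group
      _ = s (K - (m + 1)) * upA s (K - m) m := by
          rw [hc (m + 1) (by omega) (by omega), ih (by omega)]
      _ = upA s (K - (m + 1)) (m + 1) := by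
          have e2 : K - m = K - (m + 1) + 1 := by omega
          rw [e2, upA_succ']

end RwordAux

namespace RwordAux

variable {G : Type*} [Group G]

lemma main_lemma (s : ℕ → G) (n : ℕ)
    (hsq : ∀ i, 1 ≤ i → i ≤ n - 1 → s i * s i = 1)
    (hbr : ∀ i, 1 ≤ i → i + 1 ≤ n - 1 → s i * s (i + 1) * s i = s (i + 1) * s i * s (i + 1))
    (hcm : ∀ i j, 1 ≤ i → i + 2 ≤ j → j ≤ n - 1 → s i * s j = s j * s i) :
    ∀ k, 2 ≤ k → k ≤ n →
      (rwordA s k * rwordA s k = 1) ∧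
      (∀ i, 1 ≤ i → i + 1 ≤ k → rwordA s k * s i * rwordA s k = s (k - i)) := by
  intro k hk
  induction k, hk using Nat.le_induction with
  | base =>
    intro h2n
    have h11 : s 1 * s 1 = 1 := hsq 1 (by omega) (by omega)
    constructor
    · rw [rwordA_two]; exact h11
    · intro i hi hik
      have : i = 1 := by omega
      subst this
      rw [rwordA_two, h11, one_mul]
  | succ k hk ih =>
    intro hkn
    obtain ⟨hsqk, hcjk⟩ := ih (by omega)
    obtain ⟨m, rfl⟩ : ∃ m, k = m + 1 := ⟨k - 1, by omega⟩
    have hm1 : 1 ≤ m := by omega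
    have hrec : rwordA s (m + 2) = rwordA s (m + 1) * dnA s 1 (m + 1) := rwordA_succ s (m + 1)
    have hrec' : rwordA s (m + 1) = rwordA s m * dnA s 1 m := rwordA_succ s m
    have hdn1 : dnA s 1 (m + 1) = s (m + 1) * dnA s 1 m := by
      have h := dnA_succ s 1 m
      rw [show (1 : ℕ) + m = m + 1 by omega] at h
      exact h
    have hconj : rwordA s (m + 1) * dnA s 1 m * rwordA s (m + 1) = upA s 1 m := by
      have h := conj_dn s (rwordA s (m + 1)) (m + 1) hsqk hcjk m (by omega)
      rw [show m + 1 - m = 1 by omega] at h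
      exact h
    have hmulup : rwordA s (m + 1) * upA s 1 m = rwordA s m := by
      rw [hrec', mul_assoc, dn_mul_up s n hsq m 1 (by omega) (by omega), mul_one]
    have hdnr : dnA s 1 m * rwordA s (m + 1) = rwordA s m := by
      calc dnA s 1 m * rwordA s (m + 1)
          = (rwordA s (m + 1) * rwordA s (m + 1)) * (dnA s 1 m * rwordA s (m + 1)) := by
            rw [hsqk, one_mul]
        _ = rwordA s (m + 1) * (rwordA s (m + 1) * dnA s 1 m * rwordA s (m + 1)) := by group
        _ = rwordA s (m + 1) * upA s 1 m := by rw [hconj]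
        _ = rwordA s m := hmulup
    have hscomm : s (m + 1) * rwordA s m = rwordA s m * s (m + 1) :=
      comm_r s n hcm m (m + 1) (by omega) (by omega)
    have hss : s (m + 1) * s (m + 1) = 1 := hsq _ (by omega) (by omega)
    have hsq' : rwordA s (m + 2) * rwordA s (m + 2) = 1 := by
      calc rwordA s (m + 2) * rwordA s (m + 2)
          = (rwordA s (m + 1) * (s (m + 1) * dnA s 1 m)) *
              (rwordA s (m + 1) * (s (m + 1) * dnA s 1 m)) := by rw [hrec, hdn1]
        _ = rwordA s (m + 1) * (s (m + 1) * ((dnA s 1 m * rwordA s (m + 1)) *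
              (s (m + 1) * dnA s 1 m))) := by group
        _ = rwordA s (m + 1) * (s (m + 1) * ((rwordA s m * s (m + 1)) * dnA s 1 m)) := by
            rw [hdnr]; group
        _ = rwordA s (m + 1) * (s (m + 1) * ((s (m + 1) * rwordA s m) * dnA s 1 m)) := by
            rw [← hscomm]
        _ = rwordA s (m + 1) * ((s (m + 1) * s (m + 1)) * (rwordA s m * dnA s 1 m)) := by group
        _ = rwordA s (m + 1) * (rwordA s m * dnA s 1 m) := by rw [hss, one_mul]
        _ = rwordA s (m + 1) * rwordA s (m + 1) := by rw [← hrec']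
        _ = 1 := hsqk
    refine ⟨hsq', ?_⟩
    intro i hi hik
    have hAinv : (rwordA s (m + 2))⁻¹ = rwordA s (m + 2) := inv_eq_of_mul_eq_one_right hsq'
    have hrinv : (rwordA s (m + 1))⁻¹ = rwordA s (m + 1) := inv_eq_of_mul_eq_one_right hsqk
    have hdninv : (dnA s 1 (m + 1))⁻¹ = upA s 1 (m + 1) :=
      inv_eq_of_mul_eq_one_right (dn_mul_up s n hsq (m + 1) 1 (by omega) (by omega))
    by_cases hcase : i ≤ m
    · have key : rwordA s (m + 1) * s i * rwordA s (m + 1) = s (m + 1 - i) :=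
        hcjk i hi (by omega)
      calc rwordA s (m + 2) * s i * rwordA s (m + 2)
          = (rwordA s (m + 2))⁻¹ * s i * rwordA s (m + 2) := by rw [hAinv]
        _ = upA s 1 (m + 1) * (rwordA s (m + 1) * s i * rwordA s (m + 1)) * dnA s 1 (m + 1) := by
            rw [hrec, mul_inv_rev, hdninv, hrinv]; group
        _ = upA s 1 (m + 1) * s (m + 1 - i) * dnA s 1 (m + 1) := by rw [key]
        _ = s (m + 1 - i + 1) :=
            updn_shift s n hsq hbr hcm (m + 1 - i) (m + 1) (by omega) (by omega) (by omega)
        _ = s (m + 2 - i) := by congr 1; omega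
    · have hieq : i = m + 1 := by omega
      subst hieq
      have hshift : s m * dnA s 1 (m + 1) = dnA s 1 (m + 1) * s (m + 1) :=
        shift_dn s n hbr hcm m hm1 (m + 1) (by omega) (by omega)
      have key : rwordA s (m + 1) * s m * rwordA s (m + 1) = s 1 := by
        have h := hcjk m hm1 (by omega)
        rw [show m + 1 - m = 1 by omega] at h
        exact h
      calc rwordA s (m + 2) * s (m + 1) * rwordA s (m + 2)
          = rwordA s (m + 2) * s (m + 1) * (rwordA s (m + 2))⁻¹ := by rw [hAinv]
        _ = rwordA s (m + 1) * ((dnA s 1 (m + 1) * s (m + 1)) * upA s 1 (m + 1)) *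
              rwordA s (m + 1) := by
            rw [hrec, mul_inv_rev, hdninv, hrinv]; group
        _ = rwordA s (m + 1) * ((s m * dnA s 1 (m + 1)) * upA s 1 (m + 1)) *
              rwordA s (m + 1) := by rw [← hshift]
        _ = rwordA s (m + 1) * s m * ((dnA s 1 (m + 1) * upA s 1 (m + 1)) *
              rwordA s (m + 1)) := by group
        _ = rwordA s (m + 1) * s m * rwordA s (m + 1) := by
            rw [dn_mul_up s n hsq (m + 1) 1 (by omega) (by omega), one_mul]
        _ = s 1 := key
        _ = s (m + 2 - (m + 1)) := by congr 1; omega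

end RwordAux

namespace RwordAux

variable {G : Type*} [Group G]

lemma mul_rword_succ (s : ℕ → G) (k : ℕ) (h : rwordA s k * rwordA s k = 1) :
    rwordA s k * rwordA s (k + 1) = dnA s 1 k := by
  rw [rwordA_succ, ← mul_assoc, h, one_mul]

lemma rword_succ_mul_pred (s : ℕ → G) (k : ℕ)
    (h1 : rwordA s k * rwordA s k = 1)
    (h2 : rwordA s (k + 1) * rwordA s (k + 1) = 1)
    (h3 : dnA s 1 k * upA s 1 k = 1) :
    rwordA s (k + 1) * rwordA s k = upA s 1 k := by
  have hq := mul_rword_succ s k h1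
  have hinvk : (rwordA s k)⁻¹ = rwordA s k := inv_eq_of_mul_eq_one_right h1
  have hinvk1 : (rwordA s (k + 1))⁻¹ = rwordA s (k + 1) := inv_eq_of_mul_eq_one_right h2
  have h : rwordA s (k + 1) * rwordA s k = (rwordA s k * rwordA s (k + 1))⁻¹ := by
    rw [mul_inv_rev, hinvk, hinvk1]
  rw [h, hq]
  exact inv_eq_of_mul_eq_one_right h3

lemma mul_rword_succ2 (s : ℕ → G) (k : ℕ)
    (h1 : rwordA s k * rwordA s k = 1)
    (h2 : rwordA s (k + 1) * rwordA s (k + 1) = 1) :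
    rwordA s k * rwordA s (k + 2) = dnA s 1 k * dnA s 1 (k + 1) := by
  have q1 := mul_rword_succ s k h1
  have q2 : rwordA s (k + 1) * rwordA s (k + 2) = dnA s 1 (k + 1) :=
    mul_rword_succ s (k + 1) h2
  calc rwordA s k * rwordA s (k + 2)
      = (rwordA s k * rwordA s (k + 1)) * (rwordA s (k + 1) * rwordA s (k + 2)) := by
        rw [show (rwordA s k * rwordA s (k + 1)) * (rwordA s (k + 1) * rwordA s (k + 2))
          = rwordA s k * ((rwordA s (k + 1) * rwordA s (k + 1)) * rwordA s (k + 2)) by group,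
          h2, one_mul]
    _ = dnA s 1 k * dnA s 1 (k + 1) := by rw [q1, q2]

end RwordAux

open RwordAux in
theorem stmt14 (n : ℕ) (hn : 3 < n) (G : Type*) [Group G] (s : ℕ → G)
    (hA1 : ∀ i, 1 ≤ i → i ≤ n - 1 → s i * s i = 1)
    (hA2 : ∀ i, 1 ≤ i → i ≤ n - 2 → (s i * s (i + 1)) ^ 3 = 1)
    (hA3 : ∀ i j, 1 ≤ i → i ≤ n - 3 → i + 2 ≤ j → j ≤ n - 1 → (s i * s j) ^ 2 = 1) :
    let r : ℕ → G := rwordA s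
    (∀ k, 2 ≤ k → k ≤ n → r k * r k = 1) ∧
    ((r 2 * r 3) ^ 3 = 1) ∧
    (∀ k, 4 ≤ k → k ≤ n → (r 2 * r k) ^ 4 = 1) ∧
    (∀ l k, 4 ≤ l → l ≤ n → 3 ≤ k → k ≤ l - 1 →
      r l * r (l - k + 2) * r 2 * r (l - k + 2) * r l * r k * r 2 * r k = 1) ∧
    (∀ k, 3 ≤ k → k ≤ n - 1 →
      r k * r (k - 1) * r (k + 1) * r 2 * r (k + 1) * r k * r (k + 1) = 1) ∧
    (∀ k, 3 ≤ k → k ≤ n - 1 →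
      (r k * r (k - 1)) ^ 2 * r (k + 1) * r 3 * r (k + 1) * r (k - 1) * r (k + 1) = 1) := by
  intro r
  have hsinv : ∀ i, 1 ≤ i → i ≤ n - 1 → (s i)⁻¹ = s i := fun i h1 h2 =>
    inv_eq_of_mul_eq_one_right (hA1 i h1 h2)
  have hbr : ∀ i, 1 ≤ i → i + 1 ≤ n - 1 →
      s i * s (i + 1) * s i = s (i + 1) * s i * s (i + 1) := by
    intro i h1 h2
    have h3 := hA2 i h1 (by omega)
    have key : (s i * s (i + 1) * s i) * (s (i + 1) * s i * s (i + 1)) = 1 := by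
      have e : (s i * s (i + 1) * s i) * (s (i + 1) * s i * s (i + 1))
          = (s i * s (i + 1)) ^ 3 := by
        rw [pow_succ, pow_succ, pow_one]; group
      rw [e, h3]
    have h4 := eq_inv_of_mul_eq_one_left key
    rw [h4, mul_inv_rev, mul_inv_rev, hsinv i h1 (by omega), hsinv (i + 1) (by omega) h2]
    group
  have hcm : ∀ i j, 1 ≤ i → i + 2 ≤ j → j ≤ n - 1 → s i * s j = s j * s i := by
    intro i j h1 h2 h3
    have h4 := hA3 i j h1 (by omega) h2 h3
    have key : (s i * s j) * (s i * s j) = 1 := by rw [← pow_two, h4]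
    have h5 := eq_inv_of_mul_eq_one_left key
    rw [mul_inv_rev, hsinv i h1 (by omega), hsinv j (by omega) h3] at h5
    rw [h5]
  have main := main_lemma s n hA1 hbr hcm
  have r2 : rwordA s 2 = s 1 := rwordA_two s
  have r3 : rwordA s 3 = s 1 * (s 2 * s 1) := rwordA_three s
  have h11 : s 1 * s 1 = 1 := hA1 1 (by omega) (by omega)
  have h22 : s 2 * s 2 = 1 := hA1 2 (by omega) (by omega)
  refine ⟨fun k h2 hkn => (main k h2 hkn).1, ?_, ?_, ?_, ?_, ?_⟩
  · -- R2
    show (rwordA s 2 * rwordA s 3) ^ 3 = 1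
    have hb : s 1 * s 2 * s 1 = s 2 * s 1 * s 2 := hbr 1 (by omega) (by omega)
    have hx : rwordA s 2 * rwordA s 3 = s 2 * s 1 := by
      rw [r2, r3, show s 1 * (s 1 * (s 2 * s 1)) = (s 1 * s 1) * (s 2 * s 1) by group, h11,
        one_mul]
    rw [hx]
    calc (s 2 * s 1) ^ 3 = s 2 * (s 1 * s 2 * s 1) * (s 2 * s 1) := by
          rw [pow_succ, pow_succ, pow_one]; group
      _ = s 2 * (s 2 * s 1 * s 2) * (s 2 * s 1) := by rw [hb]
      _ = (s 2 * s 2) * s 1 * ((s 2 * s 2) * s 1) := by group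
      _ = s 1 * s 1 := by rw [h22]; group
      _ = 1 := h11
  · -- R3
    intro k h4 hkn
    show (rwordA s 2 * rwordA s k) ^ 4 = 1
    have hcj1 : rwordA s k * s 1 * rwordA s k = s (k - 1) :=
      (main k (by omega) hkn).2 1 (by omega) (by omega)
    have hc : s 1 * s (k - 1) = s (k - 1) * s 1 := hcm 1 (k - 1) (by omega) (by omega) (by omega)
    have hkk : s (k - 1) * s (k - 1) = 1 := hA1 (k - 1) (by omega) (by omega)
    rw [r2]
    calc (s 1 * rwordA s k) ^ 4
        = s 1 * (rwordA s k * s 1 * rwordA s k) * (s 1 * (rwordA s k * s 1 * rwordA s k)) := by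
          rw [pow_succ, pow_succ, pow_succ, pow_one]; group
      _ = s 1 * s (k - 1) * (s 1 * s (k - 1)) := by rw [hcj1]
      _ = s 1 * (s (k - 1) * s 1) * s (k - 1) := by group
      _ = s 1 * (s 1 * s (k - 1)) * s (k - 1) := by rw [← hc]
      _ = (s 1 * s 1) * (s (k - 1) * s (k - 1)) := by group
      _ = 1 := by rw [h11, hkk, one_mul]
  · -- R4
    intro l k h4l hln h3k hkl
    show rwordA s l * rwordA s (l - k + 2) * rwordA s 2 * rwordA s (l - k + 2) * rwordA s l *
      rwordA s k * rwordA s 2 * rwordA s k = 1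
    set m := l - k + 2 with hm
    have hm3 : 3 ≤ m := by omega
    have hml : m ≤ l - 1 := by omega
    have h1 : rwordA s m * s 1 * rwordA s m = s (m - 1) :=
      (main m (by omega) (by omega)).2 1 (by omega) (by omega)
    have h2 : rwordA s l * s (m - 1) * rwordA s l = s (l - (m - 1)) :=
      (main l (by omega) hln).2 (m - 1) (by omega) (by omega)
    have h3 : rwordA s k * s 1 * rwordA s k = s (k - 1) :=
      (main k (by omega) (by omega)).2 1 (by omega) (by omega)
    have e : l - (m - 1) = k - 1 := by omega
    have hss : s (k - 1) * s (k - 1) = 1 := hA1 (k - 1) (by omega) (by omega)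
    calc rwordA s l * rwordA s m * rwordA s 2 * rwordA s m * rwordA s l *
          rwordA s k * rwordA s 2 * rwordA s k
        = rwordA s l * (rwordA s m * s 1 * rwordA s m) * rwordA s l *
            (rwordA s k * s 1 * rwordA s k) := by rw [r2]; group
      _ = rwordA s l * s (m - 1) * rwordA s l * s (k - 1) := by rw [h1, h3]
      _ = s (l - (m - 1)) * s (k - 1) := by rw [h2]
      _ = s (k - 1) * s (k - 1) := by rw [e]
      _ = 1 := hss
  · -- R5
    intro k h3 hkn
    obtain ⟨m, rfl⟩ : ∃ m, k = m + 1 := ⟨k - 1, by omega⟩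
    have hm2 : 2 ≤ m := by omega
    show rwordA s (m + 1) * rwordA s (m + 1 - 1) * rwordA s (m + 2) * rwordA s 2 *
      rwordA s (m + 2) * rwordA s (m + 1) * rwordA s (m + 2) = 1
    simp only [Nat.add_sub_cancel]
    have hsq_m : rwordA s m * rwordA s m = 1 := (main m (by omega) (by omega)).1
    have hsq_m1 : rwordA s (m + 1) * rwordA s (m + 1) = 1 :=
      (main (m + 1) (by omega) (by omega)).1
    have hcjA1 : rwordA s (m + 2) * s 1 * rwordA s (m + 2) = s (m + 1) := by
      have h := (main (m + 2) (by omega) (by omega)).2 1 (by omega) (by omega)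
      rw [show m + 2 - 1 = m + 1 by omega] at h
      exact h
    have hinvm : (rwordA s m)⁻¹ = rwordA s m := inv_eq_of_mul_eq_one_right hsq_m
    have hinvm1 : (rwordA s (m + 1))⁻¹ = rwordA s (m + 1) := inv_eq_of_mul_eq_one_right hsq_m1
    have p1 : rwordA s (m + 1) * rwordA s m = upA s 1 m :=
      rword_succ_mul_pred s m hsq_m hsq_m1 (dn_mul_up s n hA1 m 1 (by omega) (by omega))
    have p2 : rwordA s (m + 1) * rwordA s (m + 2) = dnA s 1 (m + 1) :=
      mul_rword_succ s (m + 1) hsq_m1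
    have hdn1m : dnA s 1 (m + 1) = s (m + 1) * dnA s 1 m := by
      have h := dnA_succ s 1 m
      rw [show (1 : ℕ) + m = m + 1 by omega] at h
      exact h
    have hssm1 : s (m + 1) * s (m + 1) = 1 := hA1 (m + 1) (by omega) (by omega)
    calc rwordA s (m + 1) * rwordA s m * rwordA s (m + 2) * rwordA s 2 * rwordA s (m + 2) *
          rwordA s (m + 1) * rwordA s (m + 2)
        = (rwordA s (m + 1) * rwordA s m) * (rwordA s (m + 2) * s 1 * rwordA s (m + 2)) *
            (rwordA s (m + 1) * rwordA s (m + 2)) := by rw [r2]; group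
      _ = upA s 1 m * s (m + 1) * dnA s 1 (m + 1) := by rw [p1, hcjA1, p2]
      _ = upA s 1 m * s (m + 1) * (s (m + 1) * dnA s 1 m) := by rw [hdn1m]
      _ = upA s 1 m * ((s (m + 1) * s (m + 1)) * dnA s 1 m) := by group
      _ = upA s 1 m * dnA s 1 m := by rw [hssm1, one_mul]
      _ = 1 := up_mul_dn s n hA1 m 1 (by omega) (by omega)
  · -- R6
    intro k h3 hkn
    obtain ⟨t, rfl⟩ : ∃ t, k = t + 2 := ⟨k - 2, by omega⟩
    have ht1 : 1 ≤ t := by omega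
    show (rwordA s (t + 2) * rwordA s (t + 2 - 1)) ^ 2 * rwordA s (t + 2 + 1) * rwordA s 3 *
      rwordA s (t + 2 + 1) * rwordA s (t + 2 - 1) * rwordA s (t + 2 + 1) = 1
    have e1 : t + 2 - 1 = t + 1 := by omega
    have e2 : t + 2 + 1 = t + 3 := by omega
    rw [e1, e2]
    have hsq_t1 : rwordA s (t + 1) * rwordA s (t + 1) = 1 :=
      (main (t + 1) (by omega) (by omega)).1
    have hsq_t2 : rwordA s (t + 2) * rwordA s (t + 2) = 1 :=
      (main (t + 2) (by omega) (by omega)).1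
    have hsq_t3 : rwordA s (t + 3) * rwordA s (t + 3) = 1 :=
      (main (t + 3) (by omega) (by omega)).1
    have hcjA1 : rwordA s (t + 3) * s 1 * rwordA s (t + 3) = s (t + 2) := by
      have h := (main (t + 3) (by omega) (by omega)).2 1 (by omega) (by omega)
      rw [show t + 3 - 1 = t + 2 by omega] at h
      exact h
    have hcjA2 : rwordA s (t + 3) * s 2 * rwordA s (t + 3) = s (t + 1) := by
      have h := (main (t + 3) (by omega) (by omega)).2 2 (by omega) (by omega)
      rw [show t + 3 - 2 = t + 1 by omega] at h
      exact h
    have conj3 : rwordA s (t + 3) * rwordA s 3 * rwordA s (t + 3)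
        = s (t + 2) * s (t + 1) * s (t + 2) := by
      calc rwordA s (t + 3) * rwordA s 3 * rwordA s (t + 3)
          = (rwordA s (t + 3) * s 1 * rwordA s (t + 3)) *
            (rwordA s (t + 3) * s 2 * rwordA s (t + 3)) *
            (rwordA s (t + 3) * s 1 * rwordA s (t + 3)) := by
            rw [r3, show (rwordA s (t + 3) * s 1 * rwordA s (t + 3)) *
              (rwordA s (t + 3) * s 2 * rwordA s (t + 3)) *
              (rwordA s (t + 3) * s 1 * rwordA s (t + 3))
              = rwordA s (t + 3) * s 1 * ((rwordA s (t + 3) * rwordA s (t + 3)) *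
                (s 2 * ((rwordA s (t + 3) * rwordA s (t + 3)) * (s 1 * rwordA s (t + 3)))))
              by group, hsq_t3]
            group
        _ = s (t + 2) * s (t + 1) * s (t + 2) := by rw [hcjA1, hcjA2]
    have hinv1 : (rwordA s (t + 1))⁻¹ = rwordA s (t + 1) := inv_eq_of_mul_eq_one_right hsq_t1
    have hinv2 : (rwordA s (t + 2))⁻¹ = rwordA s (t + 2) := inv_eq_of_mul_eq_one_right hsq_t2
    have p1 : rwordA s (t + 2) * rwordA s (t + 1) = upA s 1 (t + 1) :=
      rword_succ_mul_pred s (t + 1) hsq_t1 hsq_t2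
        (dn_mul_up s n hA1 (t + 1) 1 (by omega) (by omega))
    have rmA : rwordA s (t + 1) * rwordA s (t + 3) = dnA s 1 (t + 1) * dnA s 1 (t + 2) :=
      mul_rword_succ2 s (t + 1) hsq_t1 hsq_t2
    have hdnm : dnA s 1 (t + 1) = s (t + 1) * dnA s 1 t := by
      have h := dnA_succ s 1 t
      rw [show (1 : ℕ) + t = t + 1 by omega] at h
      exact h
    have hdn2 : dnA s 1 (t + 2) = s (t + 2) * dnA s 1 (t + 1) := by
      have h := dnA_succ s 1 (t + 1)
      rw [show (1 : ℕ) + (t + 1) = t + 2 by omega] at h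
      exact h
    have hcomm_t : s (t + 2) * dnA s 1 t = dnA s 1 t * s (t + 2) :=
      comm_dn s n hcm t 1 (t + 2) (by omega) (by omega) (by omega)
    have hbr_t : s (t + 1) * s (t + 2) * s (t + 1) = s (t + 2) * s (t + 1) * s (t + 2) := by
      have h := hbr (t + 1) (by omega) (by omega)
      convert h using 3 <;> omega
    have braidkey : s (t + 2) * dnA s 1 (t + 1) * s (t + 2)
        = s (t + 1) * (s (t + 2) * dnA s 1 (t + 1)) := by
      calc s (t + 2) * dnA s 1 (t + 1) * s (t + 2)
          = s (t + 2) * (s (t + 1) * dnA s 1 t) * s (t + 2) := by rw [hdnm]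
        _ = s (t + 2) * s (t + 1) * (s (t + 2) * dnA s 1 t) := by
            rw [hcomm_t]; group
        _ = (s (t + 2) * s (t + 1) * s (t + 2)) * dnA s 1 t := by group
        _ = (s (t + 1) * s (t + 2) * s (t + 1)) * dnA s 1 t := by rw [← hbr_t]
        _ = s (t + 1) * (s (t + 2) * (s (t + 1) * dnA s 1 t)) := by group
        _ = s (t + 1) * (s (t + 2) * dnA s 1 (t + 1)) := by rw [← hdnm]
    have hss1 : s (t + 1) * s (t + 1) = 1 := hA1 (t + 1) (by omega) (by omega)
    have hss2 : s (t + 2) * s (t + 2) = 1 := hA1 (t + 2) (by omega) (by omega)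
    have hud : upA s 1 (t + 1) * dnA s 1 (t + 1) = 1 :=
      up_mul_dn s n hA1 (t + 1) 1 (by omega) (by omega)
    calc (rwordA s (t + 2) * rwordA s (t + 1)) ^ 2 * rwordA s (t + 3) * rwordA s 3 *
          rwordA s (t + 3) * rwordA s (t + 1) * rwordA s (t + 3)
        = (rwordA s (t + 2) * rwordA s (t + 1)) * (rwordA s (t + 2) * rwordA s (t + 1)) *
            (rwordA s (t + 3) * rwordA s 3 * rwordA s (t + 3)) *
            (rwordA s (t + 1) * rwordA s (t + 3)) := by rw [pow_two]; group
      _ = upA s 1 (t + 1) * upA s 1 (t + 1) * (s (t + 2) * s (t + 1) * s (t + 2)) *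
            (dnA s 1 (t + 1) * dnA s 1 (t + 2)) := by rw [p1, conj3, rmA]
      _ = upA s 1 (t + 1) * upA s 1 (t + 1) * (s (t + 2) * s (t + 1)) *
            ((s (t + 2) * dnA s 1 (t + 1) * s (t + 2)) * dnA s 1 (t + 1)) := by
          rw [hdn2]; group
      _ = upA s 1 (t + 1) * upA s 1 (t + 1) * (s (t + 2) * s (t + 1)) *
            ((s (t + 1) * (s (t + 2) * dnA s 1 (t + 1))) * dnA s 1 (t + 1)) := by rw [braidkey]
      _ = upA s 1 (t + 1) * upA s 1 (t + 1) *
            (s (t + 2) * ((s (t + 1) * s (t + 1)) * (s (t + 2) *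
              (dnA s 1 (t + 1) * dnA s 1 (t + 1))))) := by group
      _ = upA s 1 (t + 1) * upA s 1 (t + 1) *
            ((s (t + 2) * s (t + 2)) * (dnA s 1 (t + 1) * dnA s 1 (t + 1))) := by
          rw [hss1]; group
      _ = upA s 1 (t + 1) * upA s 1 (t + 1) * (dnA s 1 (t + 1) * dnA s 1 (t + 1)) := by
          rw [hss2, one_mul]
      _ = 1 := by
          rw [show upA s 1 (t + 1) * upA s 1 (t + 1) * (dnA s 1 (t + 1) * dnA s 1 (t + 1))
            = upA s 1 (t + 1) * (upA s 1 (t + 1) * dnA s 1 (t + 1)) * dnA s 1 (t + 1) by group,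
            hud, mul_one]
          exact hud
end

section
/- Let n > 3, let G be a group, and let r_1, …, r_n ∈ G satisfy the relations (Rb1)–(Rb8). Then the elements s_0 := r_1 and s_i := r_{i+1} r_1 r_2 r_1 r_{i+1} for i ∈ [1,n-1] satisfy the type B Coxeter relations: s_i^2 = 1 for i ∈ [0,n-1]; (s_0 s_1)^4 = 1; (s_i s_{i+1})^3 = 1 for i ∈ [1,n-2]; and (s_i s_j)^2 = 1 for i ∈ [0,n-3] and j ∈ [i+2,n-1]. -/
private lemma core1 {G : Type*} [Group G] (a b c : G) (ha : a * a = 1) (hb : b * b = 1) (hc : c * c = 1) (hA4 : (a * b) ^ 4 = 1) (hR6 : b * a * b * a * b * c * b * c * b * a * c = 1) : (a * (b * (c * (b * (a * (b * (a))))))) ^ 3 = 1 := by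
  have Ca : ∀ w : G, a * (a * w) = w := fun w => by rw [← mul_assoc, ha, one_mul]
  have Cb : ∀ w : G, b * (b * w) = w := fun w => by rw [← mul_assoc, hb, one_mul]
  have Cc : ∀ w : G, c * (c * w) = w := fun w => by rw [← mul_assoc, hc, one_mul]
  have hA4e : a * (b * (a * (b * (a * (b * (a * (b))))))) = 1 := by rw [← hA4]; simp only [pow_succ, pow_zero, one_mul, mul_assoc]
  have hR6e : b * (a * (b * (a * (b * (c * (b * (c * (b * (a * (c)))))))))) = 1 := by rw [← hR6]; group
  have ia : a⁻¹ = a := inv_eq_of_mul_eq_one_right ha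
  have ib : b⁻¹ = b := inv_eq_of_mul_eq_one_right hb
  have ic : c⁻¹ = c := inv_eq_of_mul_eq_one_right hc
  have V1 : b * (a * (b * (c * (b * (c * (b * (a * (c * (b * (a)))))))))) = 1 := by
    rw [show (b * (a * (b * (c * (b * (c * (b * (a * (c * (b * (a))))))))))) = a * (b) * ((b * (a * (b * (a * (b * (c * (b * (c * (b * (a * (c))))))))))) * (b * (a))) from by simp only [mul_assoc, Ca, Cb, Cc, ha, hb, hc, one_mul, mul_one]]
    rw [hR6e]; simp only [mul_assoc, Ca, Cb, Cc, ha, hb, hc, one_mul, mul_one]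
  have hR6er : c * (a * (b * (c * (b * (c * (b * (a * (b * (a * (b)))))))))) = 1 := by
    have hneg : (b * (a * (b * (a * (b * (c * (b * (c * (b * (a * (c)))))))))))⁻¹ = 1 := by rw [hR6e]; exact inv_one
    rw [← hneg]; simp only [mul_inv_rev, ia, ib, ic, mul_assoc]
  have V2 : b * (a * (c * (b * (a * (b * (a * (b * (c * (b * (c)))))))))) = 1 := by
    rw [show (b * (a * (c * (b * (a * (b * (a * (b * (c * (b * (c))))))))))) = c * (b * (c * (b * (a * (b * (a * (b))))))) * ((b * (a * (b * (a * (b * (c * (b * (c * (b * (a * (c))))))))))) * (b * (a * (b * (a * (b * (c * (b * (c))))))))) from by simp only [mul_assoc, Ca, Cb, Cc, ha, hb, hc, one_mul, mul_one]]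
    rw [hR6e]; simp only [mul_assoc, Ca, Cb, Cc, ha, hb, hc, one_mul, mul_one]
  have V3 : c * (b * (c * (b * (a * (c * (b * (a * (b * (a * (b)))))))))) = 1 := by
    rw [show (c * (b * (c * (b * (a * (c * (b * (a * (b * (a * (b))))))))))) = b * (a * (b * (a * (b)))) * ((b * (a * (b * (a * (b * (c * (b * (c * (b * (a * (c))))))))))) * (b * (a * (b * (a * (b)))))) from by simp only [mul_assoc, Ca, Cb, Cc, ha, hb, hc, one_mul, mul_one]]
    rw [hR6e]; simp only [mul_assoc, Ca, Cb, Cc, ha, hb, hc, one_mul, mul_one]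
  have main : a * (b * (c * (b * (a * (c * (b * (a * (c * (b * (a * (b * (a)))))))))))) = 1 := by
    calc a * (b * (c * (b * (a * (c * (b * (a * (c * (b * (a * (b * (a)))))))))))) 
      _ = (a * (b * (c * (b * (a * (c * (b * (a * (c))))))))) * ((b * (a * (b * (a * (b * (c * (b * (c * (b * (a * (c))))))))))) * (c * (a * (b * (c * (b * (c * (b)))))))) := by simp only [mul_assoc, Ca, Cb, Cc, ha, hb, hc, one_mul, mul_one]
      _ = a * (b * (c * (b * (a * (b * (c * (b))))))) := by rw [hR6e]; simp only [mul_assoc, Ca, Cb, Cc, ha, hb, hc, one_mul, mul_one]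
      _ = (a * (b * (c))) * ((b * (a * (b * (c * (b * (c * (b * (a * (c * (b * (a))))))))))) * (a * (b * (c * (a * (b * (c * (b * (b))))))))) := by simp only [mul_assoc, Ca, Cb, Cc, ha, hb, hc, one_mul, mul_one]
      _ = a * (b * (c * (a * (b * (c * (a * (b * (c)))))))) := by rw [V1]; simp only [mul_assoc, Ca, Cb, Cc, ha, hb, hc, one_mul, mul_one]
      _ = (a * (b)) * ((c * (a * (b * (c * (b * (c * (b * (a * (b * (a * (b))))))))))) * (b * (a * (b * (a * (b * (c * (b * (a * (b * (c))))))))))) := by simp only [mul_assoc, Ca, Cb, Cc, ha, hb, hc, one_mul, mul_one]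
      _ = b * (a * (b * (c * (b * (a * (b * (c))))))) := by rw [hR6er]; simp only [mul_assoc, Ca, Cb, Cc, ha, hb, hc, one_mul, mul_one]
      _ = (b) * ((a * (b * (a * (b * (a * (b * (a * (b)))))))) * (b * (a * (b * (a * (b * (a * (c * (b * (a * (b * (c)))))))))))) := by simp only [mul_assoc, Ca, Cb, Cc, ha, hb, hc, one_mul, mul_one]
      _ = a * (b * (a * (b * (a * (c * (b * (a * (b * (c))))))))) := by rw [hA4e]; simp only [mul_assoc, Ca, Cb, Cc, ha, hb, hc, one_mul, mul_one]
      _ = (a * (b * (a))) * ((b * (a * (c * (b * (a * (b * (a * (b * (c * (b * (c))))))))))) * (c * (b * (c * (b * (a * (b * (a * (a * (b * (c))))))))))) := by simp only [mul_assoc, Ca, Cb, Cc, ha, hb, hc, one_mul, mul_one]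
      _ = a * (b * (a * (c * (b * (c * (b * (a * (c)))))))) := by rw [V2]; simp only [mul_assoc, Ca, Cb, Cc, ha, hb, hc, one_mul, mul_one]
      _ = (a * (b * (a))) * ((c * (b * (c * (b * (a * (c * (b * (a * (b * (a * (b))))))))))) * (b * (a * (b * (a * (b * (c * (a * (a * (c)))))))))) := by simp only [mul_assoc, Ca, Cb, Cc, ha, hb, hc, one_mul, mul_one]
      _ = a * (b * (a * (b * (a * (b * (a * (b))))))) := by rw [V3]; simp only [mul_assoc, Ca, Cb, Cc, ha, hb, hc, one_mul, mul_one]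
      _ = (a * (b * (a * (b * (a * (b * (a * (b)))))))) * (b * (a * (b * (a * (b * (a * (a * (b * (a * (b * (a * (b)))))))))))) := by simp only [mul_assoc, Ca, Cb, Cc, ha, hb, hc, one_mul, mul_one]
      _ = (1 : G) := by rw [hA4e]; simp only [mul_assoc, Ca, Cb, Cc, ha, hb, hc, one_mul, mul_one]
  have expand : (a * (b * (c * (b * (a * (b * (a))))))) ^ 3 = a * (b * (c * (b * (a * (c * (b * (a * (c * (b * (a * (b * (a)))))))))))) := by
    simp only [pow_succ, pow_zero, mul_assoc, Ca, Cb, Cc, ha, hb, hc, one_mul, mul_one]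
  exact expand.trans main

private lemma core2 {G : Type*} [Group G] (a b m : G) (ha : a * a = 1) (hb : b * b = 1) (hm : m * m = 1) (hB4 : (a * m) ^ 4 = 1) (hR5 : (m * a * m * b) ^ 2 = 1) : (a * (m * (a * (b * (a * (m)))))) ^ 2 = 1 := by
  have Ca : ∀ w : G, a * (a * w) = w := fun w => by rw [← mul_assoc, ha, one_mul]
  have Cb : ∀ w : G, b * (b * w) = w := fun w => by rw [← mul_assoc, hb, one_mul]
  have Cm : ∀ w : G, m * (m * w) = w := fun w => by rw [← mul_assoc, hm, one_mul]
  have hB4e : a * (m * (a * (m * (a * (m * (a * (m))))))) = 1 := by rw [← hB4]; simp only [pow_succ, pow_zero, one_mul, mul_assoc]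
  have hR5e : m * (a * (m * (b * (m * (a * (m * (b))))))) = 1 := by rw [← hR5]; simp only [pow_succ, pow_zero, one_mul, mul_assoc]
  have ia : a⁻¹ = a := inv_eq_of_mul_eq_one_right ha
  have ib : b⁻¹ = b := inv_eq_of_mul_eq_one_right hb
  have im : m⁻¹ = m := inv_eq_of_mul_eq_one_right hm
  have main : a * (m * (a * (b * (a * (m * (a * (m * (a * (b * (a * (m))))))))))) = 1 := by
    calc a * (m * (a * (b * (a * (m * (a * (m * (a * (b * (a * (m))))))))))) 
      _ = (a * (m * (a * (b)))) * ((a * (m * (a * (m * (a * (m * (a * (m)))))))) * (m * (a * (m * (a * (m * (a * (a * (m * (a * (b * (a * (m))))))))))))) := by simp only [mul_assoc, Ca, Cb, Cm, ha, hb, hm, one_mul, mul_one]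
      _ = a * (m * (a * (b * (m * (a * (m * (b * (a * (m))))))))) := by rw [hB4e]; simp only [mul_assoc, Ca, Cb, Cm, ha, hb, hm, one_mul, mul_one]
      _ = (a * (m * (a * (b)))) * ((m * (a * (m * (b * (m * (a * (m * (b)))))))) * (b * (m * (a * (m * (b * (m * (m * (b * (a * (m))))))))))) := by simp only [mul_assoc, Ca, Cb, Cm, ha, hb, hm, one_mul, mul_one]
      _ = a * (m * (a * (m * (a * (m * (a * (m))))))) := by rw [hR5e]; simp only [mul_assoc, Ca, Cb, Cm, ha, hb, hm, one_mul, mul_one]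
      _ = (a * (m * (a * (m * (a * (m * (a * (m)))))))) * (m * (a * (m * (a * (m * (a * (a * (m * (a * (m * (a * (m)))))))))))) := by simp only [mul_assoc, Ca, Cb, Cm, ha, hb, hm, one_mul, mul_one]
      _ = (1 : G) := by rw [hB4e]; simp only [mul_assoc, Ca, Cb, Cm, ha, hb, hm, one_mul, mul_one]
  have expand : (a * (m * (a * (b * (a * (m)))))) ^ 2 = a * (m * (a * (b * (a * (m * (a * (m * (a * (b * (a * (m))))))))))) := by
    simp only [pow_succ, pow_zero, mul_assoc, Ca, Cb, Cm, ha, hb, hm, one_mul, mul_one]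
  exact expand.trans main

private lemma core3 {G : Type*} [Group G] (a b k l m : G) (ha : a * a = 1) (hb : b * b = 1) (hk : k * k = 1) (hl : l * l = 1) (hm : m * m = 1) (hB4 : (a * b * a * m) ^ 4 = 1) (hR8 : k * a * b * a * k * l * m * a * b * a * m * l = 1) : (k * (a * (b * (a * (k * (l * (a * (b * (a * (l)))))))))) ^ 2 = 1 := by
  have Ca : ∀ w : G, a * (a * w) = w := fun w => by rw [← mul_assoc, ha, one_mul]
  have Cb : ∀ w : G, b * (b * w) = w := fun w => by rw [← mul_assoc, hb, one_mul]
  have Cm : ∀ w : G, m * (m * w) = w := fun w => by rw [← mul_assoc, hm, one_mul]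
  have Ck : ∀ w : G, k * (k * w) = w := fun w => by rw [← mul_assoc, hk, one_mul]
  have Cl : ∀ w : G, l * (l * w) = w := fun w => by rw [← mul_assoc, hl, one_mul]
  have hB4e : a * (b * (a * (m * (a * (b * (a * (m * (a * (b * (a * (m * (a * (b * (a * (m))))))))))))))) = 1 := by rw [← hB4]; simp only [pow_succ, pow_zero, one_mul, mul_assoc]
  have hR8e : k * (a * (b * (a * (k * (l * (m * (a * (b * (a * (m * (l))))))))))) = 1 := by rw [← hR8]; group
  have ia : a⁻¹ = a := inv_eq_of_mul_eq_one_right ha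
  have ib : b⁻¹ = b := inv_eq_of_mul_eq_one_right hb
  have im : m⁻¹ = m := inv_eq_of_mul_eq_one_right hm
  have ik : k⁻¹ = k := inv_eq_of_mul_eq_one_right hk
  have il : l⁻¹ = l := inv_eq_of_mul_eq_one_right hl
  have main : k * (a * (b * (a * (k * (l * (a * (b * (a * (l * (k * (a * (b * (a * (k * (l * (a * (b * (a * (l))))))))))))))))))) = 1 := by
    calc k * (a * (b * (a * (k * (l * (a * (b * (a * (l * (k * (a * (b * (a * (k * (l * (a * (b * (a * (l))))))))))))))))))) 
      _ = (k * (a * (b * (a * (k * (l * (a * (b * (a * (l)))))))))) * ((k * (a * (b * (a * (k * (l * (m * (a * (b * (a * (m * (l)))))))))))) * (l * (m * (a * (b * (a * (m * (l * (k * (k * (l * (a * (b * (a * (l))))))))))))))) := by simp only [mul_assoc, Ca, Cb, Cm, Ck, Cl, ha, hb, hm, hk, hl, one_mul, mul_one]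
      _ = k * (a * (b * (a * (k * (l * (a * (b * (a * (m * (a * (b * (a * (m * (a * (b * (a * (l))))))))))))))))) := by rw [hR8e]; simp only [mul_assoc, Ca, Cb, Cm, Ck, Cl, ha, hb, hm, hk, hl, one_mul, mul_one]
      _ = (k * (a * (b * (a * (k * (l)))))) * ((a * (b * (a * (m * (a * (b * (a * (m * (a * (b * (a * (m * (a * (b * (a * (m)))))))))))))))) * (m * (a * (b * (a * (m * (a * (b * (a * (m * (a * (a * (m * (a * (b * (a * (l))))))))))))))))) := by simp only [mul_assoc, Ca, Cb, Cm, Ck, Cl, ha, hb, hm, hk, hl, one_mul, mul_one]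
      _ = k * (a * (b * (a * (k * (l * (m * (a * (b * (a * (m * (l))))))))))) := by rw [hB4e]; simp only [mul_assoc, Ca, Cb, Cm, Ck, Cl, ha, hb, hm, hk, hl, one_mul, mul_one]
      _ = (k * (a * (b * (a * (k * (l * (m * (a * (b * (a * (m * (l)))))))))))) * (l * (m * (a * (b * (a * (m * (l * (k * (k * (l * (m * (a * (b * (a * (m * (l)))))))))))))))) := by simp only [mul_assoc, Ca, Cb, Cm, Ck, Cl, ha, hb, hm, hk, hl, one_mul, mul_one]
      _ = (1 : G) := by rw [hR8e]; simp only [mul_assoc, Ca, Cb, Cm, Ck, Cl, ha, hb, hm, hk, hl, one_mul, mul_one]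
  have expand : (k * (a * (b * (a * (k * (l * (a * (b * (a * (l)))))))))) ^ 2 = k * (a * (b * (a * (k * (l * (a * (b * (a * (l * (k * (a * (b * (a * (k * (l * (a * (b * (a * (l))))))))))))))))))) := by
    simp only [pow_succ, pow_zero, mul_assoc, Ca, Cb, Cm, Ck, Cl, ha, hb, hm, hk, hl, one_mul, mul_one]
  exact expand.trans main

private lemma sq5 {G : Type*} [Group G] (x y z : G) (hx : x * x = 1) (hy : y * y = 1)
    (hz : z * z = 1) : (x * y * z * y * x) * (x * y * z * y * x) = 1 := by
  have Cx : ∀ w : G, x * (x * w) = w := fun w => by rw [← mul_assoc, hx, one_mul]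
  have Cy : ∀ w : G, y * (y * w) = w := fun w => by rw [← mul_assoc, hy, one_mul]
  have Cz : ∀ w : G, z * (z * w) = w := fun w => by rw [← mul_assoc, hz, one_mul]
  simp only [mul_assoc, Cx, Cy, Cz, hx, hy, hz]

theorem stmt15 (n : ℕ) (hn : 3 < n) (G : Type*) [Group G] (r : ℕ → G)
    (hRb1 : ∀ k, 1 ≤ k → k ≤ n → r k * r k = 1)
    (hRb2 : (r 2 * r 3) ^ 6 = 1)
    (hRb3 : ∀ k, 2 ≤ k → k ≤ n → (r 1 * r k) ^ 4 = 1)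
    (hRb4 : ∀ k, 4 ≤ k → k ≤ n → (r 1 * r 2 * r 1 * r k) ^ 4 = 1)
    (hRb5 : ∀ k, 3 ≤ k → k ≤ n → (r k * r 1 * r k * r 2) ^ 2 = 1)
    (hRb6 : ∀ k, 2 ≤ k → k ≤ n - 1 →
      r k * r 1 * r 2 * r 1 * r k * r (k + 1) * r 2 * r 3 * r 2 * r 1 * r (k + 1) = 1)
    (hRb7 : ∀ k, 2 ≤ k → k ≤ n - 1 →
      r (k + 1) * r 1 * r 2 * r 1 * r (k + 1) * r (k - 1) * r k * r (k + 1) * r k = 1)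
    (hRb8 : ∀ k l, 2 ≤ k → k ≤ n - 2 → k + 2 ≤ l → l ≤ n →
      r k * r 1 * r 2 * r 1 * r k * r l * r (l - k + 2) * r 1 * r 2 * r 1 * r (l - k + 2) * r l = 1) :
    let s : ℕ → G := fun i => if i = 0 then r 1 else r (i + 1) * r 1 * r 2 * r 1 * r (i + 1)
    (∀ i, i ≤ n - 1 → s i * s i = 1) ∧
    ((s 0 * s 1) ^ 4 = 1) ∧
    (∀ i, 1 ≤ i → i ≤ n - 2 → (s i * s (i + 1)) ^ 3 = 1) ∧
    (∀ i j, i ≤ n - 3 → i + 2 ≤ j → j ≤ n - 1 → (s i * s j) ^ 2 = 1) := by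
  intro s
  have s0 : s 0 = r 1 := rfl
  have sk : ∀ i : ℕ, i ≠ 0 → s i = r (i + 1) * r 1 * r 2 * r 1 * r (i + 1) :=
    fun i h => if_neg h
  have h1 : r 1 * r 1 = 1 := hRb1 1 le_rfl (by omega)
  have h2 : r 2 * r 2 = 1 := hRb1 2 (by omega) (by omega)
  have h3 : r 3 * r 3 = 1 := hRb1 3 (by omega) (by omega)
  refine ⟨?_, ?_, ?_, ?_⟩
  · -- squares
    intro i hi
    by_cases h0 : i = 0
    · rw [h0, s0]; exact h1
    · rw [sk i h0]
      exact sq5 (r (i + 1)) (r 1) (r 2) (hRb1 (i + 1) (by omega) (by omega)) h1 h2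
  · -- (s0 s1)^4
    have sk1 : s 1 = r 2 * r 1 * r 2 * r 1 * r 2 := sk 1 one_ne_zero
    rw [s0, sk1]
    have e : r 1 * (r 2 * r 1 * r 2 * r 1 * r 2) = (r 1 * r 2) ^ 3 := by
      simp only [pow_succ, pow_zero, one_mul, mul_assoc]
    have e2 : ((r 1 * r 2) ^ 3) ^ 4 = ((r 1 * r 2) ^ 4) ^ 3 := by
      rw [← pow_mul, ← pow_mul]
    rw [e, e2, hRb3 2 le_rfl (by omega), one_pow]
  · -- braid relations
    intro i hi1 hi2
    have hk6 : (r (i + 1) * (r 1 * (r 2 * (r 1 * r (i + 1))))) *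
        (r (i + 2) * (r 2 * (r 3 * (r 2 * (r 1 * r (i + 2)))))) = 1 := by
      simpa only [mul_assoc] using hRb6 (i + 1) (by omega) (by omega)
    have hJ : r (i + 2) * r (i + 2) = 1 := hRb1 (i + 2) (by omega) (by omega)
    have iJ : (r (i + 2))⁻¹ = r (i + 2) := inv_eq_of_mul_eq_one_right hJ
    have C1 : ∀ w : G, r 1 * (r 1 * w) = w := fun w => by rw [← mul_assoc, h1, one_mul]
    have C2 : ∀ w : G, r 2 * (r 2 * w) = w := fun w => by rw [← mul_assoc, h2, one_mul]
    have C3 : ∀ w : G, r 3 * (r 3 * w) = w := fun w => by rw [← mul_assoc, h3, one_mul]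
    have CJ : ∀ w : G, r (i + 2) * (r (i + 2) * w) = w := fun w => by
      rw [← mul_assoc, hJ, one_mul]
    have si_eq : r (i + 1) * r 1 * r 2 * r 1 * r (i + 1) =
        r (i + 2) * (r 1 * (r 2 * (r 3 * (r 2 * r (i + 2))))) := by
      calc r (i + 1) * r 1 * r 2 * r 1 * r (i + 1)
          = ((r (i + 1) * (r 1 * (r 2 * (r 1 * r (i + 1))))) *
              (r (i + 2) * (r 2 * (r 3 * (r 2 * (r 1 * r (i + 2))))))) *
            (r (i + 2) * (r 1 * (r 2 * (r 3 * (r 2 * r (i + 2)))))) := by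
            simp only [mul_assoc, C1, C2, C3, CJ, h1, h2, h3, hJ, one_mul, mul_one]
        _ = r (i + 2) * (r 1 * (r 2 * (r 3 * (r 2 * r (i + 2))))) := by
            rw [hk6, one_mul]
    have ski : s i = r (i + 1) * r 1 * r 2 * r 1 * r (i + 1) := sk i (by omega)
    have skj : s (i + 1) = r (i + 2) * r 1 * r 2 * r 1 * r (i + 2) := sk (i + 1) (by omega)
    rw [ski, skj, si_eq]
    have e3 : r (i + 2) * (r 1 * (r 2 * (r 3 * (r 2 * r (i + 2))))) *
        (r (i + 2) * r 1 * r 2 * r 1 * r (i + 2)) =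
        r (i + 2) * (r 1 * (r 2 * (r 3 * (r 2 * (r 1 * (r 2 * r 1)))))) * (r (i + 2))⁻¹ := by
      rw [iJ]
      simp only [mul_assoc, C1, C2, C3, CJ, h1, h2, h3, hJ, one_mul, mul_one]
    rw [e3]
    have e4 : (r (i + 2) * (r 1 * (r 2 * (r 3 * (r 2 * (r 1 * (r 2 * r 1)))))) *
        (r (i + 2))⁻¹) ^ 3 =
        r (i + 2) * ((r 1 * (r 2 * (r 3 * (r 2 * (r 1 * (r 2 * r 1)))))) ^ 3) *
        (r (i + 2))⁻¹ := by
      simp only [pow_succ, pow_zero, one_mul, mul_assoc, inv_mul_cancel_left]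
    rw [e4, core1 (r 1) (r 2) (r 3) h1 h2 h3 (hRb3 2 le_rfl (by omega))
      (hRb6 2 le_rfl (by omega)), mul_one, mul_inv_cancel]
  · -- commuting relations
    intro i j hi hij hj
    by_cases h0 : i = 0
    · rw [h0, s0, sk j (by omega)]
      have hm : r (j + 1) * r (j + 1) = 1 := hRb1 (j + 1) (by omega) (by omega)
      simpa only [mul_assoc] using core2 (r 1) (r 2) (r (j + 1)) h1 h2 hm
        (hRb3 (j + 1) (by omega) (by omega)) (hRb5 (j + 1) (by omega) (by omega))
    · rw [sk i h0, sk j (by omega)]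
      have hk : r (i + 1) * r (i + 1) = 1 := hRb1 (i + 1) (by omega) (by omega)
      have hl : r (j + 1) * r (j + 1) = 1 := hRb1 (j + 1) (by omega) (by omega)
      have hm : r (j + 1 - (i + 1) + 2) * r (j + 1 - (i + 1) + 2) = 1 :=
        hRb1 _ (by omega) (by omega)
      have h4m : (r 1 * r 2 * r 1 * r (j + 1 - (i + 1) + 2)) ^ 4 = 1 :=
        hRb4 _ (by omega) (by omega)
      have h8 := hRb8 (i + 1) (j + 1) (by omega) (by omega) (by omega) (by omega)
      simpa only [mul_assoc] using core3 (r 1) (r 2) (r (i + 1)) (r (j + 1))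
        (r (j + 1 - (i + 1) + 2)) h1 h2 hk hl hm h4m h8
end

section
/- Let n > 3, let G be a group, let s_0, s_1, …, s_{n-1} ∈ G satisfy the type B Coxeter relations, and define r_k = s_0 (s_1 s_0) (s_2 s_1 s_0) ⋯ (s_{k-1} s_{k-2} ⋯ s_0) for k ∈ [1,n] (so r_1 = s_0). Then the elements r_1, …, r_n satisfy the relations (Rb1)–(Rb8). -/
namespace Stmt16Aux

variable {G : Type*} [Group G]

/-- Derived forms of the type B Coxeter relations. -/
structure SRel (n : ℕ) (s : ℕ → G) : Prop where
  sq : ∀ i, i < n → s i * s i = 1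
  comm : ∀ i j, i + 2 ≤ j → j < n → Commute (s i) (s j)
  braid : ∀ i, 1 ≤ i → i + 1 < n → s i * s (i + 1) * s i = s (i + 1) * s i * s (i + 1)
  ord4 : s 0 * s 1 * s 0 * s 1 = s 1 * s 0 * s 1 * s 0

/-- `t k = s_{k-1} ⋯ s_1 s_0 s_1 ⋯ s_{k-1}` (the sign change in coordinate `k`). -/
def t (s : ℕ → G) : ℕ → G
  | 0 => 1
  | 1 => s 0
  | k + 2 => s (k + 1) * t s (k + 1) * s (k + 1)

/-- `u k = s_{k-1} s_{k-2} ⋯ s_1`. -/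
def u (s : ℕ → G) : ℕ → G
  | 0 => 1
  | 1 => 1
  | k + 2 => s (k + 1) * u s (k + 1)

/-- `q k = s_1 s_2 ⋯ s_{k-1}`. -/
def q (s : ℕ → G) : ℕ → G
  | 0 => 1
  | 1 => 1
  | k + 2 => q s (k + 1) * s (k + 1)

/-- `p k = u 2 * u 3 * ⋯ * u k` (the longest element of the symmetric group on `1..k`). -/
def p (s : ℕ → G) : ℕ → G
  | 0 => 1
  | 1 => 1
  | k + 2 => p s (k + 1) * u s (k + 2)

/-- `T k = t 1 * t 2 * ⋯ * t k`. -/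
def T (s : ℕ → G) : ℕ → G
  | 0 => 1
  | k + 1 => T s k * t s (k + 1)

variable {n : ℕ} {s : ℕ → G}

lemma t_succ (k : ℕ) (hk : 1 ≤ k) : t s (k + 1) = s k * t s k * s k := by
  obtain ⟨m, rfl⟩ : ∃ m, k = m + 1 := ⟨k - 1, by omega⟩
  rfl

lemma u_succ (k : ℕ) (hk : 1 ≤ k) : u s (k + 1) = s k * u s k := by
  obtain ⟨m, rfl⟩ : ∃ m, k = m + 1 := ⟨k - 1, by omega⟩
  rfl

lemma q_succ (k : ℕ) (hk : 1 ≤ k) : q s (k + 1) = q s k * s k := by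
  obtain ⟨m, rfl⟩ : ∃ m, k = m + 1 := ⟨k - 1, by omega⟩
  rfl

lemma p_succ (k : ℕ) : p s (k + 1) = p s k * u s (k + 1) := by
  cases k with
  | zero => simp [p, u]
  | succ m => rfl

lemma T_succ (k : ℕ) : T s (k + 1) = T s k * t s (k + 1) := rfl

lemma pow3 (x : G) : x ^ 3 = x * x * x := by rw [pow_succ, pow_two]

lemma pow4 (x : G) : x ^ 4 = (x * x) * (x * x) := by
  rw [show (4 : ℕ) = 2 * 2 from rfl, pow_mul, pow_two, pow_two]

lemma pow6 (x : G) : x ^ 6 = x ^ 3 * x ^ 3 := by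
  rw [show (6 : ℕ) = 3 * 2 from rfl, pow_mul, pow_two]

lemma t_sq (H : SRel n s) : ∀ k, 1 ≤ k → k ≤ n → t s k * t s k = 1 := by
  intro k hk
  induction k, hk using Nat.le_induction with
  | base => intro _; exact H.sq 0 (by omega)
  | succ k hk ih =>
    intro hkn
    have hs := H.sq k (by omega)
    have ht := ih (by omega)
    rw [t_succ k hk]
    calc s k * t s k * s k * (s k * t s k * s k)
        = s k * (t s k * ((s k * s k) * (t s k * s k))) := by group
      _ = s k * (t s k * (t s k * s k)) := by rw [hs, one_mul]
      _ = s k * ((t s k * t s k) * s k) := by group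
      _ = s k * s k := by rw [ht, one_mul]
      _ = 1 := hs

lemma st_comm_gt (H : SRel n s) : ∀ k, 1 ≤ k → ∀ i, k + 1 ≤ i → i < n →
    Commute (s i) (t s k) := by
  intro k hk
  induction k, hk using Nat.le_induction with
  | base => intro i hi hin; exact (H.comm 0 i (by omega) hin).symm
  | succ k hk ih =>
    intro i hi hin
    rw [t_succ k hk]
    exact ((H.comm k i (by omega) hin).symm.mul_right (ih i (by omega) hin)).mul_right
      (H.comm k i (by omega) hin).symm

lemma st_adj1 (H : SRel n s) (k : ℕ) (hk : 1 ≤ k) (hkn : k < n) :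
    SemiconjBy (s k) (t s k) (t s (k + 1)) := by
  show s k * t s k = t s (k + 1) * s k
  rw [t_succ k hk]
  calc s k * t s k = s k * t s k * 1 := by rw [mul_one]
    _ = s k * t s k * (s k * s k) := by rw [H.sq k hkn]
    _ = s k * t s k * s k * s k := by group

lemma st_adj2 (H : SRel n s) (k : ℕ) (hk : 1 ≤ k) (hkn : k < n) :
    SemiconjBy (s k) (t s (k + 1)) (t s k) := by
  show s k * t s (k + 1) = t s k * s k
  rw [t_succ k hk]
  calc s k * (s k * t s k * s k) = (s k * s k) * (t s k * s k) := by group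
    _ = t s k * s k := by rw [H.sq k hkn, one_mul]

lemma st_comm_lt (H : SRel n s) : ∀ i k, i + 2 ≤ k → k ≤ n → Commute (s i) (t s k) := by
  intro i k hik
  induction k, hik using Nat.le_induction with
  | base =>
    intro hn2
    rcases Nat.eq_zero_or_pos i with rfl | hi
    · show s 0 * t s 2 = t s 2 * s 0
      rw [show t s 2 = s 1 * s 0 * s 1 from rfl]
      calc s 0 * (s 1 * s 0 * s 1) = s 0 * s 1 * s 0 * s 1 := by group
        _ = s 1 * s 0 * s 1 * s 0 := H.ord4
        _ = (s 1 * s 0 * s 1) * s 0 := by group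
    · have hb := H.braid i hi (by omega)
      have hc := (st_comm_gt H i hi (i + 1) (by omega) (by omega)).eq
      show s i * t s (i + 2) = t s (i + 2) * s i
      rw [t_succ (i + 1) (by omega), t_succ i (by omega)]
      calc s i * (s (i + 1) * (s i * t s i * s i) * s (i + 1))
          = (s i * s (i + 1) * s i) * (t s i * (s i * s (i + 1))) := by group
        _ = (s (i + 1) * s i * s (i + 1)) * (t s i * (s i * s (i + 1))) := by rw [hb]
        _ = s (i + 1) * s i * (s (i + 1) * t s i) * (s i * s (i + 1)) := by group
        _ = s (i + 1) * s i * (t s i * s (i + 1)) * (s i * s (i + 1)) := by rw [hc]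
        _ = (s (i + 1) * (s i * t s i)) * (s (i + 1) * s i * s (i + 1)) := by group
        _ = (s (i + 1) * (s i * t s i)) * (s i * s (i + 1) * s i) := by rw [← hb]
        _ = s (i + 1) * (s i * t s i * s i) * s (i + 1) * s i := by group
  | succ k hk ih =>
    intro hkn
    rw [t_succ k (by omega)]
    exact ((H.comm i k (by omega) (by omega)).mul_right (ih (by omega))).mul_right
      (H.comm i k (by omega) (by omega))

lemma t_comm (H : SRel n s) : ∀ j, 1 ≤ j → ∀ k, j < k → k ≤ n →
    Commute (t s j) (t s k) := by
  intro j hj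
  induction j, hj using Nat.le_induction with
  | base => intro k hk hkn; exact st_comm_lt H 0 k (by omega) hkn
  | succ j hj ih =>
    intro k hk hkn
    rw [t_succ j hj]
    exact Commute.mul_left
      (Commute.mul_left (st_comm_lt H j k (by omega) hkn) (ih k (by omega) hkn))
      (st_comm_lt H j k (by omega) hkn)

lemma su_comm (H : SRel n s) : ∀ j i, j + 1 ≤ i → i < n → Commute (s i) (u s j) := by
  intro j
  induction j with
  | zero => intro i _ _; exact Commute.one_right _
  | succ m ih =>
    intro i hji hin
    cases m with
    | zero => exact Commute.one_right _
    | succ m' =>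
      rw [u_succ (m' + 1) (by omega)]
      exact (H.comm (m' + 1) i (by omega) hin).symm.mul_right (ih i (by omega) hin)

lemma sq_comm (H : SRel n s) : ∀ j i, j + 1 ≤ i → i < n → Commute (s i) (q s j) := by
  intro j
  induction j with
  | zero => intro i _ _; exact Commute.one_right _
  | succ m ih =>
    intro i hji hin
    cases m with
    | zero => exact Commute.one_right _
    | succ m' =>
      rw [q_succ (m' + 1) (by omega)]
      exact (ih i (by omega) hin).mul_right (H.comm (m' + 1) i (by omega) hin).symm

lemma us_rule (H : SRel n s) : ∀ i, 1 ≤ i → ∀ k, i + 1 ≤ k → k < n →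
    SemiconjBy (u s (k + 1)) (s (i + 1)) (s i) := by
  intro i hi k hik
  induction k, hik using Nat.le_induction with
  | base =>
    intro hn
    have h1 : u s (i + 2) = s (i + 1) * (s i * u s i) := by
      rw [u_succ (i + 1) (by omega), u_succ i hi]
    show u s (i + 2) * s (i + 1) = s i * u s (i + 2)
    rw [h1]
    have hc := (su_comm H i (i + 1) (by omega) (by omega)).eq
    have hb := H.braid i hi (by omega)
    calc s (i + 1) * (s i * u s i) * s (i + 1)
        = s (i + 1) * s i * (u s i * s (i + 1)) := by group
      _ = s (i + 1) * s i * (s (i + 1) * u s i) := by rw [← hc]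
      _ = (s (i + 1) * s i * s (i + 1)) * u s i := by group
      _ = (s i * s (i + 1) * s i) * u s i := by rw [← hb]
      _ = s i * (s (i + 1) * (s i * u s i)) := by group
  | succ k hk ih =>
    intro hkn
    rw [u_succ (k + 1) (by omega)]
    exact SemiconjBy.mul_left (H.comm i (k + 1) (by omega) (by omega)).symm (ih (by omega))

lemma qs_rule (H : SRel n s) : ∀ i, 1 ≤ i → ∀ k, i + 1 ≤ k → k < n →
    SemiconjBy (q s (k + 1)) (s i) (s (i + 1)) := by
  intro i hi k hik
  induction k, hik using Nat.le_induction with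
  | base =>
    intro hn
    have h1 : q s (i + 2) = q s i * s i * s (i + 1) := by
      rw [q_succ (i + 1) (by omega), q_succ i hi]
    show q s (i + 2) * s i = s (i + 1) * q s (i + 2)
    rw [h1]
    have hc := (sq_comm H i (i + 1) (by omega) (by omega)).eq
    have hb := H.braid i hi (by omega)
    calc q s i * s i * s (i + 1) * s i
        = q s i * (s i * s (i + 1) * s i) := by group
      _ = q s i * (s (i + 1) * s i * s (i + 1)) := by rw [hb]
      _ = (q s i * s (i + 1)) * (s i * s (i + 1)) := by group
      _ = (s (i + 1) * q s i) * (s i * s (i + 1)) := by rw [← hc]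
      _ = s (i + 1) * (q s i * s i * s (i + 1)) := by group
  | succ k hk ih =>
    intro hkn
    rw [q_succ (k + 1) (by omega)]
    exact SemiconjBy.mul_left (ih (by omega)) (H.comm i (k + 1) (by omega) (by omega)).symm

lemma uq_one (H : SRel n s) : ∀ k, k ≤ n → u s k * q s k = 1 := by
  intro k
  induction k with
  | zero => intro _; simp [u, q]
  | succ m ih =>
    intro hkn
    cases m with
    | zero => simp [u, q]
    | succ m' =>
      rw [u_succ (m' + 1) (by omega), q_succ (m' + 1) (by omega)]
      calc s (m' + 1) * u s (m' + 1) * (q s (m' + 1) * s (m' + 1))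
          = s (m' + 1) * (u s (m' + 1) * q s (m' + 1)) * s (m' + 1) := by group
        _ = s (m' + 1) * 1 * s (m' + 1) := by rw [ih (by omega)]
        _ = s (m' + 1) * s (m' + 1) := by rw [mul_one]
        _ = 1 := H.sq (m' + 1) (by omega)

lemma qu_one (H : SRel n s) : ∀ k, k ≤ n → q s k * u s k = 1 := by
  intro k
  induction k with
  | zero => intro _; simp [u, q]
  | succ m ih =>
    intro hkn
    cases m with
    | zero => simp [u, q]
    | succ m' =>
      rw [u_succ (m' + 1) (by omega), q_succ (m' + 1) (by omega)]
      calc q s (m' + 1) * s (m' + 1) * (s (m' + 1) * u s (m' + 1))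
          = q s (m' + 1) * (s (m' + 1) * s (m' + 1)) * u s (m' + 1) := by group
        _ = q s (m' + 1) * 1 * u s (m' + 1) := by rw [H.sq (m' + 1) (by omega)]
        _ = q s (m' + 1) * u s (m' + 1) := by rw [mul_one]
        _ = 1 := ih (by omega)

lemma uqs (H : SRel n s) (k : ℕ) (hk : 1 ≤ k) (hkn : k ≤ n) :
    u s k * q s (k + 1) = s k := by
  rw [q_succ k hk, ← mul_assoc, uq_one H k hkn, one_mul]

lemma ut_comm (H : SRel n s) : ∀ j m, j + 1 ≤ m → m ≤ n → Commute (u s j) (t s m) := by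
  intro j
  induction j with
  | zero => intro m _ _; exact Commute.one_left _
  | succ j ih =>
    intro m hjm hmn
    cases j with
    | zero => exact Commute.one_left _
    | succ j' =>
      rw [u_succ (j' + 1) (by omega)]
      exact Commute.mul_left (st_comm_lt H (j' + 1) m (by omega) hmn) (ih m (by omega) hmn)

lemma ut1 (H : SRel n s) : ∀ k, k + 1 ≤ n → SemiconjBy (u s (k + 1)) (t s 1) (t s (k + 1)) := by
  intro k
  induction k with
  | zero => intro _; exact SemiconjBy.one_left _
  | succ k ih =>
    intro hkn
    rw [u_succ (k + 1) (by omega)]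
    exact SemiconjBy.mul_left (st_adj1 H (k + 1) (by omega) (by omega)) (ih (by omega))

lemma ut2 (H : SRel n s) : ∀ i, 1 ≤ i → ∀ k, i ≤ k → k + 1 ≤ n →
    SemiconjBy (u s (k + 1)) (t s (i + 1)) (t s i) := by
  intro i hi k hik
  induction k, hik using Nat.le_induction with
  | base =>
    intro hin
    rw [u_succ i hi]
    exact SemiconjBy.mul_left (st_adj2 H i hi (by omega)) (ut_comm H i (i + 1) (by omega) (by omega))
  | succ k hk ih =>
    intro hkn
    rw [u_succ (k + 1) (by omega)]
    exact SemiconjBy.mul_left (st_comm_gt H i hi (k + 1) (by omega) (by omega)) (ih (by omega))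

lemma ps_comm (H : SRel n s) : ∀ j i, j + 1 ≤ i → i < n → Commute (s i) (p s j) := by
  intro j
  induction j with
  | zero => intro i _ _; exact Commute.one_right _
  | succ j ih =>
    intro i hji hin
    cases j with
    | zero => exact Commute.one_right _
    | succ j' =>
      rw [p_succ (j' + 1)]
      exact Commute.mul_right (ih i (by omega) hin) (su_comm H (j' + 2) i (by omega) hin)

lemma pt_comm (H : SRel n s) : ∀ j m, j + 1 ≤ m → m ≤ n → Commute (p s j) (t s m) := by
  intro j
  induction j with
  | zero => intro m _ _; exact Commute.one_left _
  | succ j ih =>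
    intro m hjm hmn
    cases j with
    | zero => exact Commute.one_left _
    | succ j' =>
      rw [p_succ (j' + 1)]
      exact Commute.mul_left (ih m (by omega) hmn) (ut_comm H (j' + 2) m (by omega) hmn)

lemma p_two (H : SRel n s) : ∀ k, 1 ≤ k → k + 1 ≤ n → p s (k + 1) = q s (k + 1) * p s k := by
  intro k hk
  induction k, hk using Nat.le_induction with
  | base => intro _; simp [p, q, u]
  | succ k hk ih =>
    intro hkn
    have hcomm := (ps_comm H k (k + 1) (by omega) (by omega)).eq
    calc p s (k + 2) = p s (k + 1) * u s (k + 2) := p_succ (k + 1)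
      _ = (q s (k + 1) * p s k) * (s (k + 1) * u s (k + 1)) := by
            rw [ih (by omega), u_succ (k + 1) (by omega)]
      _ = q s (k + 1) * (p s k * s (k + 1)) * u s (k + 1) := by group
      _ = q s (k + 1) * (s (k + 1) * p s k) * u s (k + 1) := by rw [← hcomm]
      _ = (q s (k + 1) * s (k + 1)) * (p s k * u s (k + 1)) := by group
      _ = q s (k + 2) * p s (k + 1) := by rw [← q_succ (k + 1) (by omega), ← p_succ k]

lemma p_sq (H : SRel n s) : ∀ k, k ≤ n → p s k * p s k = 1 := by
  intro k
  induction k with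
  | zero => intro _; simp [p]
  | succ m ih =>
    intro hkn
    cases m with
    | zero => simp [p]
    | succ m' =>
      have h1 := p_two H (m' + 1) (by omega) (by omega)
      have h2 := p_succ (s := s) (m' + 1)
      have key : p s (m' + 2) * p s (m' + 2)
          = q s (m' + 2) * ((p s (m' + 1) * p s (m' + 1)) * u s (m' + 2)) := by
        nth_rewrite 1 [h1]
        nth_rewrite 1 [h2]
        group
      rw [key, ih (by omega), one_mul, qu_one H (m' + 2) hkn]

lemma ps_rule (H : SRel n s) : ∀ k, 1 ≤ k → k ≤ n → ∀ i, 1 ≤ i → i + 1 ≤ k →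
    SemiconjBy (p s k) (s i) (s (k - i)) := by
  intro k hk
  induction k, hk using Nat.le_induction with
  | base => intro _ i hi hik; exact absurd hik (by omega)
  | succ k hk ih =>
    intro hkn i hi hik
    rcases Nat.lt_or_ge i k with hlt | hge
    · have e : k + 1 - i = (k - i) + 1 := by omega
      rw [e, p_two H k hk hkn]
      exact SemiconjBy.mul_left (qs_rule H (k - i) (by omega) k (by omega) (by omega))
        (ih (by omega) i hi (by omega))
    · have hik' : i = k := by omega
      subst hik'
      rcases Nat.eq_or_lt_of_le hi with h1 | h2
      · -- i = 1, k = 1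
        have : i = 1 := h1.symm
        subst this
        show SemiconjBy (p s 2) (s 1) (s (2 - 1))
        have hp2 : p s 2 = s 1 := by simp [p, u]
        show p s 2 * s 1 = s (2 - 1) * p s 2
        rw [hp2]
      · obtain ⟨m, rfl⟩ : ∃ m, i = m + 1 := ⟨i - 1, by omega⟩
        have hm : 1 ≤ m := by omega
        rw [show m + 1 + 1 - (m + 1) = 1 from by omega, p_succ (m + 1)]
        have ha := ih (by omega) m hm (by omega)
        rw [show m + 1 - m = 1 from by omega] at ha
        exact SemiconjBy.mul_left ha (us_rule H m hm (m + 1) (by omega) (by omega))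

lemma pt_rule (H : SRel n s) : ∀ k, 1 ≤ k → k ≤ n → ∀ i, 1 ≤ i → i ≤ k →
    SemiconjBy (p s k) (t s i) (t s (k + 1 - i)) := by
  intro k hk
  induction k, hk using Nat.le_induction with
  | base =>
    intro _ i hi hik
    have : i = 1 := by omega
    subst this
    exact SemiconjBy.one_left _
  | succ k hk ih =>
    intro hkn i hi hik
    rcases Nat.eq_or_lt_of_le hi with h1 | h2
    · have : i = 1 := h1.symm
      subst this
      rw [show k + 1 + 1 - 1 = k + 1 from by omega, p_succ k]
      exact SemiconjBy.mul_left (pt_comm H k (k + 1) (by omega) (by omega)) (ut1 H k (by omega))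
    · obtain ⟨m, rfl⟩ : ∃ m, i = m + 1 := ⟨i - 1, by omega⟩
      have e : k + 1 + 1 - (m + 1) = k + 1 - m := by omega
      rw [e, p_succ k]
      exact SemiconjBy.mul_left (ih (by omega) m (by omega) (by omega))
        (ut2 H m (by omega) k (by omega) (by omega))

lemma sT_gt (H : SRel n s) : ∀ k i, k + 1 ≤ i → i < n → Commute (s i) (T s k) := by
  intro k
  induction k with
  | zero => intro i _ _; exact Commute.one_right _
  | succ k ih =>
    intro i hki hin
    exact Commute.mul_right (ih i (by omega) hin) (st_comm_gt H (k + 1) (by omega) i hki hin)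

lemma Tt_comm (H : SRel n s) : ∀ k, k ≤ n → ∀ i, 1 ≤ i → i ≤ n → Commute (T s k) (t s i) := by
  intro k
  induction k with
  | zero => intro _ i _ _; exact Commute.one_left _
  | succ k ih =>
    intro hkn i hi hin
    refine Commute.mul_left (ih (by omega) i hi hin) ?_
    rcases lt_trichotomy i (k + 1) with h | h | h
    · exact (t_comm H i hi (k + 1) h (by omega)).symm
    · rw [h]
      exact Commute.refl _
    · exact t_comm H (k + 1) (by omega) i h hin

lemma T_sq (H : SRel n s) : ∀ k, k ≤ n → T s k * T s k = 1 := by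
  intro k
  induction k with
  | zero => intro _; simp [T]
  | succ k ih =>
    intro hkn
    have hc := (Tt_comm H k (by omega) (k + 1) (by omega) (by omega)).eq
    have h1 := t_sq H (k + 1) (by omega) (by omega)
    calc T s (k + 1) * T s (k + 1)
        = T s k * (t s (k + 1) * T s k) * t s (k + 1) := by rw [T_succ]; group
      _ = T s k * (T s k * t s (k + 1)) * t s (k + 1) := by rw [← hc]
      _ = (T s k * T s k) * (t s (k + 1) * t s (k + 1)) := by group
      _ = 1 := by rw [ih (by omega), h1, one_mul]

lemma sT_lt (H : SRel n s) : ∀ i, 1 ≤ i → ∀ k, i + 1 ≤ k → k ≤ n → Commute (s i) (T s k) := by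
  intro i hi k hik
  induction k, hik using Nat.le_induction with
  | base =>
    intro hin
    obtain ⟨m, rfl⟩ : ∃ m, i = m + 1 := ⟨i - 1, by omega⟩
    have c0 : Commute (s (m + 1)) (T s m) := sT_gt H m (m + 1) (by omega) (by omega)
    have h1 : SemiconjBy (s (m + 1)) (t s (m + 1) * t s (m + 2)) (t s (m + 2) * t s (m + 1)) :=
      SemiconjBy.mul_right (st_adj1 H (m + 1) (by omega) (by omega))
        (st_adj2 H (m + 1) (by omega) (by omega))
    have h2 : t s (m + 2) * t s (m + 1) = t s (m + 1) * t s (m + 2) :=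
      (t_comm H (m + 1) (by omega) (m + 2) (by omega) (by omega)).eq.symm
    rw [h2] at h1
    have e : T s (m + 2) = T s m * (t s (m + 1) * t s (m + 2)) := by
      rw [T_succ (m + 1), T_succ m]; group
    rw [e]
    exact Commute.mul_right c0 h1
  | succ k hk ih =>
    intro hkn
    exact Commute.mul_right (ih (by omega)) (st_comm_lt H i (k + 1) (by omega) hkn)

lemma uT_comm (H : SRel n s) : ∀ j m, j ≤ m → m ≤ n → Commute (u s j) (T s m) := by
  intro j
  induction j with
  | zero => intro m _ _; exact Commute.one_left _
  | succ j ih =>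
    intro m hjm hmn
    cases j with
    | zero => exact Commute.one_left _
    | succ j' =>
      rw [u_succ (j' + 1) (by omega)]
      exact Commute.mul_left (sT_lt H (j' + 1) (by omega) m (by omega) hmn)
        (ih m (by omega) hmn)

lemma pT_comm (H : SRel n s) : ∀ k, k ≤ n → Commute (p s k) (T s k) := by
  intro k
  induction k with
  | zero => intro _; exact Commute.one_left _
  | succ m ih =>
    intro hkn
    cases m with
    | zero => exact Commute.one_left _
    | succ m' =>
      rw [p_succ (m' + 1)]
      have c1 : Commute (p s (m' + 1)) (T s (m' + 2)) := by
        rw [T_succ (m' + 1)]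
        exact Commute.mul_right (ih (by omega)) (pt_comm H (m' + 1) (m' + 2) (by omega) hkn)
      exact Commute.mul_left c1 (uT_comm H (m' + 2) (m' + 2) le_rfl hkn)

lemma TuT (H : SRel n s) : ∀ k, k + 1 ≤ n →
    T s k * (u s (k + 1) * t s 1) = u s (k + 1) * T s (k + 1) := by
  intro k
  induction k with
  | zero => intro _; simp [T, u]
  | succ k ih =>
    intro hkn
    have h1 := (st_adj2 H (k + 1) (by omega) (by omega)).eq
    have h2 := (sT_gt H k (k + 1) (by omega) (by omega)).eq
    have h3 := (ut_comm H (k + 1) (k + 2) (by omega) (by omega)).eq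
    have h4 := (t_comm H 1 (by omega) (k + 2) (by omega) (by omega)).eq
    have h5 := ih (by omega)
    calc T s (k + 1) * (u s (k + 2) * t s 1)
        = T s k * ((t s (k + 1) * s (k + 1)) * (u s (k + 1) * t s 1)) := by
          rw [T_succ k, u_succ (k + 1) (by omega)]; group
      _ = T s k * ((s (k + 1) * t s (k + 2)) * (u s (k + 1) * t s 1)) := by rw [h1]
      _ = (T s k * s (k + 1)) * ((t s (k + 2) * u s (k + 1)) * t s 1) := by group
      _ = (s (k + 1) * T s k) * ((u s (k + 1) * t s (k + 2)) * t s 1) := by rw [← h2, ← h3]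
      _ = s (k + 1) * (T s k * (u s (k + 1) * (t s (k + 2) * t s 1))) := by group
      _ = s (k + 1) * (T s k * (u s (k + 1) * (t s 1 * t s (k + 2)))) := by rw [← h4]
      _ = s (k + 1) * (T s k * (u s (k + 1) * t s 1) * t s (k + 2)) := by group
      _ = s (k + 1) * (u s (k + 1) * T s (k + 1) * t s (k + 2)) := by rw [h5]
      _ = (s (k + 1) * u s (k + 1)) * (T s (k + 1) * t s (k + 2)) := by group
      _ = u s (k + 2) * T s (k + 2) := by rw [← u_succ (k + 1) (by omega), ← T_succ (k + 1)]

lemma rword_zero : rwordB s 0 = 1 := by simp [rwordB]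

lemma inner_eq : ∀ j, ((List.range (j + 1)).map (fun i => s (j - i))).prod
    = u s (j + 1) * t s 1 := by
  intro j
  induction j with
  | zero => simp [u, t]
  | succ j ih =>
    rw [List.range_succ_eq_map]
    simp only [List.map_cons, List.map_map, List.prod_cons, Nat.sub_zero]
    have e : ((fun i => s (j + 1 - i)) ∘ Nat.succ) = fun i => s (j - i) := by
      funext i
      simp [Function.comp, Nat.succ_sub_succ]
    rw [e, ih, u_succ (j + 1) (by omega)]
    group

lemma rword_succ (k : ℕ) : rwordB s (k + 1) = rwordB s k * (u s (k + 1) * t s 1) := by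
  unfold rwordB
  rw [List.range_succ, List.map_append, List.prod_append]
  simp only [List.map_cons, List.map_nil, List.prod_cons, List.prod_nil, mul_one]
  rw [inner_eq]

lemma r_eq (H : SRel n s) : ∀ k, k ≤ n → rwordB s k = p s k * T s k := by
  intro k
  induction k with
  | zero => intro _; rw [rword_zero]; simp [p, T]
  | succ k ih =>
    intro hkn
    rw [rword_succ k, ih (by omega), mul_assoc, TuT H k hkn, ← mul_assoc, ← p_succ k]

lemma r_sq (H : SRel n s) (k : ℕ) (hkn : k ≤ n) : rwordB s k * rwordB s k = 1 := by
  rw [r_eq H k hkn]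
  have hc := (pT_comm H k hkn).eq
  calc p s k * T s k * (p s k * T s k) = p s k * (T s k * p s k) * T s k := by group
    _ = p s k * (p s k * T s k) * T s k := by rw [← hc]
    _ = (p s k * p s k) * (T s k * T s k) := by group
    _ = 1 := by rw [p_sq H k hkn, T_sq H k hkn, one_mul]

lemma rt1 (H : SRel n s) (k : ℕ) (hk : 1 ≤ k) (hkn : k ≤ n) :
    SemiconjBy (rwordB s k) (t s 1) (t s k) := by
  rw [r_eq H k hkn]
  have h := pt_rule H k hk hkn 1 le_rfl hk
  rw [show k + 1 - 1 = k from by omega] at h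
  exact SemiconjBy.mul_left h (Tt_comm H k hkn 1 le_rfl (by omega))

lemma rs (H : SRel n s) (k i : ℕ) (hi : 1 ≤ i) (hik : i + 1 ≤ k) (hkn : k ≤ n) :
    SemiconjBy (rwordB s k) (s i) (s (k - i)) := by
  rw [r_eq H k hkn]
  exact SemiconjBy.mul_left (ps_rule H k (by omega) hkn i hi hik)
    (sT_lt H i hi k hik hkn).symm

lemma rt_comm (H : SRel n s) (j m : ℕ) (hjm : j + 1 ≤ m) (hmn : m ≤ n) :
    Commute (rwordB s j) (t s m) := by
  rw [r_eq H j (by omega)]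
  exact Commute.mul_left (pt_comm H j m hjm hmn) (Tt_comm H j (by omega) m (by omega) hmn)

lemma r_one : rwordB s 1 = t s 1 := by
  rw [rword_succ 0, rword_zero]
  simp [u]

lemma r_two : rwordB s 2 = t s 1 * (s 1 * t s 1) := by
  rw [rword_succ 1, r_one]
  simp [u, mul_assoc]

lemma r121 (H : SRel n s) (hn : 2 ≤ n) : rwordB s 1 * rwordB s 2 * rwordB s 1 = s 1 := by
  rw [r_one, r_two]
  have h1 := t_sq H 1 le_rfl (by omega)
  calc t s 1 * (t s 1 * (s 1 * t s 1)) * t s 1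
      = (t s 1 * t s 1) * s 1 * (t s 1 * t s 1) := by group
    _ = s 1 := by rw [h1]; group

lemma r_mul_succ (H : SRel n s) (k : ℕ) (hkn : k + 1 ≤ n) :
    rwordB s k * rwordB s (k + 1) = u s (k + 1) * t s 1 := by
  rw [rword_succ k, ← mul_assoc, r_sq H k (by omega), one_mul]

lemma r2321 (H : SRel n s) (hn3 : 3 ≤ n) :
    rwordB s 2 * rwordB s 3 * rwordB s 2 * rwordB s 1 = s 2 := by
  have h23 : rwordB s 2 * rwordB s 3 = u s 3 * t s 1 := r_mul_succ H 2 hn3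
  have hu3 : u s 3 = s 2 * s 1 := by simp [u]
  have ht1 := t_sq H 1 le_rfl (by omega)
  have hs1 := H.sq 1 (by omega)
  calc rwordB s 2 * rwordB s 3 * rwordB s 2 * rwordB s 1
      = (rwordB s 2 * rwordB s 3) * (rwordB s 2 * rwordB s 1) := by group
    _ = (s 2 * s 1 * t s 1) * (t s 1 * (s 1 * t s 1) * t s 1) := by
        rw [h23, hu3, r_two, r_one]
    _ = s 2 * s 1 * (t s 1 * t s 1) * s 1 * (t s 1 * t s 1) := by group
    _ = s 2 * (s 1 * s 1) := by rw [ht1]; group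
    _ = s 2 := by rw [hs1, mul_one]

lemma rb2 (H : SRel n s) (hn : 4 ≤ n) : (rwordB s 2 * rwordB s 3) ^ 6 = 1 := by
  have h23 : rwordB s 2 * rwordB s 3 = u s 3 * t s 1 := r_mul_succ H 2 (by omega)
  have hu3 : u s 3 = s 2 * s 1 := by simp [u]
  have hb := H.braid 1 le_rfl (by omega)
  have hs1 := H.sq 1 (by omega)
  have hs2 := H.sq 2 (by omega)
  have hv3 : (s 2 * s 1) * (s 2 * s 1) * (s 2 * s 1) = 1 := by
    calc (s 2 * s 1) * (s 2 * s 1) * (s 2 * s 1)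
        = s 2 * (s 1 * s 2 * s 1) * (s 2 * s 1) := by group
      _ = s 2 * (s 2 * s 1 * s 2) * (s 2 * s 1) := by rw [hb]
      _ = (s 2 * s 2) * s 1 * (s 2 * s 2) * s 1 := by group
      _ = s 1 * s 1 := by rw [hs2]; group
      _ = 1 := hs1
  have m1 : t s 1 * (s 2 * s 1) = (s 2 * s 1) * t s 2 := by
    have h := (ut2 H 1 le_rfl 2 (by omega) (by omega)).eq
    rw [hu3] at h
    exact h.symm
  have m2 : t s 2 * (s 2 * s 1) = (s 2 * s 1) * t s 3 := by
    have h := (ut2 H 2 (by omega) 2 le_rfl (by omega)).eq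
    rw [hu3] at h
    exact h.symm
  have hx3 : (rwordB s 2 * rwordB s 3) ^ 3 = t s 3 * (t s 2 * t s 1) := by
    rw [h23, hu3]
    calc (s 2 * s 1 * t s 1) ^ 3
        = (s 2 * s 1) * (t s 1 * (s 2 * s 1)) * (t s 1 * (s 2 * s 1)) * t s 1 := by
          rw [pow3]; group
      _ = (s 2 * s 1) * ((s 2 * s 1) * t s 2) * ((s 2 * s 1) * t s 2) * t s 1 := by rw [m1]
      _ = (s 2 * s 1) * (s 2 * s 1) * (t s 2 * (s 2 * s 1)) * (t s 2 * t s 1) := by group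
      _ = (s 2 * s 1) * (s 2 * s 1) * ((s 2 * s 1) * t s 3) * (t s 2 * t s 1) := by rw [m2]
      _ = ((s 2 * s 1) * (s 2 * s 1) * (s 2 * s 1)) * (t s 3 * (t s 2 * t s 1)) := by group
      _ = t s 3 * (t s 2 * t s 1) := by rw [hv3, one_mul]
  have c13 := (t_comm H 1 le_rfl 3 (by omega) (by omega)).eq
  have c12 := (t_comm H 1 le_rfl 2 (by omega) (by omega)).eq
  have c23 := (t_comm H 2 (by omega) 3 (by omega) (by omega)).eq
  have t1s := t_sq H 1 le_rfl (by omega)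
  have t2s := t_sq H 2 (by omega) (by omega)
  have t3s := t_sq H 3 (by omega) (by omega)
  have hfin : (t s 3 * (t s 2 * t s 1)) * (t s 3 * (t s 2 * t s 1)) = 1 := by
    calc (t s 3 * (t s 2 * t s 1)) * (t s 3 * (t s 2 * t s 1))
        = t s 3 * (t s 2 * ((t s 1 * t s 3) * (t s 2 * t s 1))) := by group
      _ = t s 3 * (t s 2 * ((t s 3 * t s 1) * (t s 2 * t s 1))) := by rw [c13]
      _ = t s 3 * ((t s 2 * t s 3) * ((t s 1 * t s 2) * t s 1)) := by group
      _ = t s 3 * ((t s 3 * t s 2) * ((t s 2 * t s 1) * t s 1)) := by rw [c23, c12]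
      _ = (t s 3 * t s 3) * ((t s 2 * t s 2) * (t s 1 * t s 1)) := by group
      _ = 1 := by rw [t3s, t2s, t1s]; simp
  calc (rwordB s 2 * rwordB s 3) ^ 6
      = (rwordB s 2 * rwordB s 3) ^ 3 * (rwordB s 2 * rwordB s 3) ^ 3 := pow6 _
    _ = 1 := by rw [hx3]; exact hfin

end Stmt16Aux

open Stmt16Aux

theorem stmt16 (n : ℕ) (hn : 3 < n) (G : Type*) [Group G] (s : ℕ → G)
    (hB1 : ∀ i, i ≤ n - 1 → s i * s i = 1)
    (hB2 : (s 0 * s 1) ^ 4 = 1)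
    (hB3 : ∀ i, 1 ≤ i → i ≤ n - 2 → (s i * s (i + 1)) ^ 3 = 1)
    (hB4 : ∀ i j, i ≤ n - 3 → i + 2 ≤ j → j ≤ n - 1 → (s i * s j) ^ 2 = 1) :
    let r : ℕ → G := rwordB s
    (∀ k, 1 ≤ k → k ≤ n → r k * r k = 1) ∧
    ((r 2 * r 3) ^ 6 = 1) ∧
    (∀ k, 2 ≤ k → k ≤ n → (r 1 * r k) ^ 4 = 1) ∧
    (∀ k, 4 ≤ k → k ≤ n → (r 1 * r 2 * r 1 * r k) ^ 4 = 1) ∧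
    (∀ k, 3 ≤ k → k ≤ n → (r k * r 1 * r k * r 2) ^ 2 = 1) ∧
    (∀ k, 2 ≤ k → k ≤ n - 1 →
      r k * r 1 * r 2 * r 1 * r k * r (k + 1) * r 2 * r 3 * r 2 * r 1 * r (k + 1) = 1) ∧
    (∀ k, 2 ≤ k → k ≤ n - 1 →
      r (k + 1) * r 1 * r 2 * r 1 * r (k + 1) * r (k - 1) * r k * r (k + 1) * r k = 1) ∧
    (∀ k l, 2 ≤ k → k ≤ n - 2 → k + 2 ≤ l → l ≤ n →
      r k * r 1 * r 2 * r 1 * r k * r l * r (l - k + 2) * r 1 * r 2 * r 1 * r (l - k + 2) * r l = 1) := by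
  have H : SRel n s := by
    constructor
    · intro i hi
      exact hB1 i (by omega)
    · intro i j hij hj
      have h4 := hB4 i j (by omega) hij (by omega)
      have hsi := hB1 i (by omega)
      have hsj := hB1 j (by omega)
      have h2 : (s i * s j) * (s i * s j) = 1 := by rw [pow_two] at h4; exact h4
      show s i * s j = s j * s i
      calc s i * s j = ((s i * s j))⁻¹ := (inv_eq_of_mul_eq_one_right h2).symm
        _ = (s j)⁻¹ * (s i)⁻¹ := by group
        _ = s j * s i := by
            rw [inv_eq_of_mul_eq_one_right hsj, inv_eq_of_mul_eq_one_right hsi]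
    · intro i hi hin
      have h3 := hB3 i hi (by omega)
      have hsi := hB1 i (by omega)
      have hsi1 := hB1 (i + 1) (by omega)
      have e : (s i * s (i + 1) * s i) * (s (i + 1) * s i * s (i + 1)) = 1 := by
        rw [Stmt16Aux.pow3] at h3
        rw [← h3]; group
      have heq : s i * s (i + 1) * s i = (s (i + 1) * s i * s (i + 1))⁻¹ :=
        eq_inv_of_mul_eq_one_left e
      rw [heq, mul_inv_rev, mul_inv_rev, inv_eq_of_mul_eq_one_right hsi1,
        inv_eq_of_mul_eq_one_right hsi]
      group
    · have hs0 := hB1 0 (by omega)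
      have hs1 := hB1 1 (by omega)
      have h2 : ((s 0 * s 1) * (s 0 * s 1)) * ((s 0 * s 1) * (s 0 * s 1)) = 1 := by
        rw [Stmt16Aux.pow4] at hB2
        exact hB2
      calc s 0 * s 1 * s 0 * s 1 = (s 0 * s 1) * (s 0 * s 1) := by group
        _ = ((s 0 * s 1) * (s 0 * s 1))⁻¹ := (inv_eq_of_mul_eq_one_right h2).symm
        _ = (s 1)⁻¹ * (s 0)⁻¹ * ((s 1)⁻¹ * (s 0)⁻¹) := by group
        _ = s 1 * s 0 * (s 1 * s 0) := by
            rw [inv_eq_of_mul_eq_one_right hs0, inv_eq_of_mul_eq_one_right hs1]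
        _ = s 1 * s 0 * s 1 * s 0 := by group
  intro r
  have hr : r = rwordB s := rfl
  simp only [hr]
  refine ⟨?_, ?_, ?_, ?_, ?_, ?_, ?_, ?_⟩
  · -- Rb1
    intro k hk hkn
    exact r_sq H k hkn
  · -- Rb2
    exact rb2 H (by omega)
  · -- Rb3
    intro k hk hkn
    have h1 := (rt1 H k (by omega) hkn).eq
    have hx : (rwordB s 1 * rwordB s k) * (rwordB s 1 * rwordB s k) = t s 1 * t s k := by
      rw [r_one]
      calc t s 1 * rwordB s k * (t s 1 * rwordB s k)
          = t s 1 * (rwordB s k * t s 1) * rwordB s k := by group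
        _ = t s 1 * (t s k * rwordB s k) * rwordB s k := by rw [h1]
        _ = t s 1 * t s k * (rwordB s k * rwordB s k) := by group
        _ = t s 1 * t s k := by rw [r_sq H k hkn, mul_one]
    have hc := (t_comm H 1 le_rfl k (by omega) hkn).eq
    have h4 : (t s 1 * t s k) * (t s 1 * t s k) = 1 := by
      calc (t s 1 * t s k) * (t s 1 * t s k) = t s 1 * (t s k * t s 1) * t s k := by group
        _ = t s 1 * (t s 1 * t s k) * t s k := by rw [← hc]
        _ = (t s 1 * t s 1) * (t s k * t s k) := by group
        _ = 1 := by rw [t_sq H 1 le_rfl (by omega), t_sq H k (by omega) hkn, one_mul]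
    calc (rwordB s 1 * rwordB s k) ^ 4
        = ((rwordB s 1 * rwordB s k) * (rwordB s 1 * rwordB s k)) *
          ((rwordB s 1 * rwordB s k) * (rwordB s 1 * rwordB s k)) := Stmt16Aux.pow4 _
      _ = 1 := by rw [hx]; exact h4
  · -- Rb4
    intro k hk hkn
    rw [r121 H (by omega)]
    have hrs := (rs H k 1 le_rfl (by omega) hkn).eq
    have hx : (s 1 * rwordB s k) * (s 1 * rwordB s k) = s 1 * s (k - 1) := by
      calc s 1 * rwordB s k * (s 1 * rwordB s k)
          = s 1 * (rwordB s k * s 1) * rwordB s k := by group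
        _ = s 1 * (s (k - 1) * rwordB s k) * rwordB s k := by rw [hrs]
        _ = s 1 * s (k - 1) * (rwordB s k * rwordB s k) := by group
        _ = s 1 * s (k - 1) := by rw [r_sq H k hkn, mul_one]
    have hc := (H.comm 1 (k - 1) (by omega) (by omega)).eq
    have h4 : (s 1 * s (k - 1)) * (s 1 * s (k - 1)) = 1 := by
      calc (s 1 * s (k - 1)) * (s 1 * s (k - 1)) = s 1 * (s (k - 1) * s 1) * s (k - 1) := by group
        _ = s 1 * (s 1 * s (k - 1)) * s (k - 1) := by rw [← hc]
        _ = (s 1 * s 1) * (s (k - 1) * s (k - 1)) := by group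
        _ = 1 := by rw [H.sq 1 (by omega), H.sq (k - 1) (by omega), one_mul]
    calc (s 1 * rwordB s k) ^ 4
        = ((s 1 * rwordB s k) * (s 1 * rwordB s k)) *
          ((s 1 * rwordB s k) * (s 1 * rwordB s k)) := Stmt16Aux.pow4 _
      _ = 1 := by rw [hx]; exact h4
  · -- Rb5
    intro k hk hkn
    have hA : rwordB s k * rwordB s 1 * rwordB s k = t s k := by
      rw [r_one, (rt1 H k (by omega) hkn).eq, mul_assoc, r_sq H k hkn, mul_one]
    rw [hA]
    have hc := (rt_comm H 2 k (by omega) hkn).eq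
    have hstart : (t s k * rwordB s 2) ^ 2 = t s k * (rwordB s 2 * t s k) * rwordB s 2 := by
      rw [pow_two]; group
    calc (t s k * rwordB s 2) ^ 2 = t s k * (rwordB s 2 * t s k) * rwordB s 2 := hstart
      _ = t s k * (t s k * rwordB s 2) * rwordB s 2 := by rw [hc]
      _ = (t s k * t s k) * (rwordB s 2 * rwordB s 2) := by group
      _ = 1 := by rw [t_sq H k (by omega) hkn, r_sq H 2 (by omega), one_mul]
  · -- Rb6
    intro k hk hkn
    have e1 := (rs H k 1 le_rfl (by omega) (by omega)).eq
    have e2 := (rs H (k + 1) 2 (by omega) (by omega) (by omega)).eq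
    rw [show k + 1 - 2 = k - 1 from by omega] at e2
    have hA : rwordB s k * s 1 * rwordB s k = s (k - 1) := by
      rw [e1, mul_assoc, r_sq H k (by omega), mul_one]
    have hB : rwordB s (k + 1) * s 2 * rwordB s (k + 1) = s (k - 1) := by
      rw [e2, mul_assoc, r_sq H (k + 1) (by omega), mul_one]
    calc rwordB s k * rwordB s 1 * rwordB s 2 * rwordB s 1 * rwordB s k * rwordB s (k + 1) *
          rwordB s 2 * rwordB s 3 * rwordB s 2 * rwordB s 1 * rwordB s (k + 1)
        = (rwordB s k * (rwordB s 1 * rwordB s 2 * rwordB s 1) * rwordB s k) *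
          (rwordB s (k + 1) * (rwordB s 2 * rwordB s 3 * rwordB s 2 * rwordB s 1) *
            rwordB s (k + 1)) := by group
      _ = (rwordB s k * s 1 * rwordB s k) * (rwordB s (k + 1) * s 2 * rwordB s (k + 1)) := by
          rw [r121 H (by omega), r2321 H (by omega)]
      _ = s (k - 1) * s (k - 1) := by rw [hA, hB]
      _ = 1 := H.sq (k - 1) (by omega)
  · -- Rb7
    intro k hk hkn
    obtain ⟨m, rfl⟩ : ∃ m, k = m + 1 := ⟨k - 1, by omega⟩
    simp only [Nat.add_sub_cancel]
    have e1 := (rs H (m + 2) 1 le_rfl (by omega) (by omega)).eq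
    rw [show m + 2 - 1 = m + 1 from by omega] at e1
    have hA : rwordB s (m + 2) * s 1 * rwordB s (m + 2) = s (m + 1) := by
      rw [e1, mul_assoc, r_sq H (m + 2) (by omega), mul_one]
    have hw1 : rwordB s m * rwordB s (m + 1) = u s (m + 1) * t s 1 :=
      r_mul_succ H m (by omega)
    have hw2 : rwordB s (m + 2) * rwordB s (m + 1) = t s 1 * q s (m + 2) := by
      have h := r_mul_succ H (m + 1) (by omega)
      have e : rwordB s (m + 2) * rwordB s (m + 1)
          = (rwordB s (m + 1) * rwordB s (m + 2))⁻¹ := by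
        rw [mul_inv_rev, inv_eq_of_mul_eq_one_right (r_sq H (m + 1) (by omega)),
          inv_eq_of_mul_eq_one_right (r_sq H (m + 2) (by omega))]
      rw [e, h, mul_inv_rev, inv_eq_of_mul_eq_one_right (uq_one H (m + 2) (by omega)),
        inv_eq_of_mul_eq_one_right (t_sq H 1 le_rfl (by omega))]
    have ht1 := t_sq H 1 le_rfl (by omega)
    have huq := uqs H (m + 1) (by omega) (by omega)
    calc rwordB s (m + 2) * rwordB s 1 * rwordB s 2 * rwordB s 1 * rwordB s (m + 2) *
          rwordB s m * rwordB s (m + 1) * rwordB s (m + 2) * rwordB s (m + 1)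
        = (rwordB s (m + 2) * (rwordB s 1 * rwordB s 2 * rwordB s 1) * rwordB s (m + 2)) *
          ((rwordB s m * rwordB s (m + 1)) * (rwordB s (m + 2) * rwordB s (m + 1))) := by group
      _ = s (m + 1) * ((u s (m + 1) * t s 1) * (t s 1 * q s (m + 2))) := by
          rw [r121 H (by omega), hA, hw1, hw2]
      _ = s (m + 1) * (u s (m + 1) * ((t s 1 * t s 1) * q s (m + 2))) := by group
      _ = s (m + 1) * (u s (m + 1) * q s (m + 2)) := by rw [ht1]; group
      _ = s (m + 1) * s (m + 1) := by rw [huq]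
      _ = 1 := H.sq (m + 1) (by omega)
  · -- Rb8
    intro k l hk hkn hkl hln
    have e1 := (rs H k 1 le_rfl (by omega) (by omega)).eq
    have hA : rwordB s k * s 1 * rwordB s k = s (k - 1) := by
      rw [e1, mul_assoc, r_sq H k (by omega), mul_one]
    have e2 := (rs H (l - k + 2) 1 le_rfl (by omega) (by omega)).eq
    rw [show l - k + 2 - 1 = l - k + 1 from by omega] at e2
    have hin : rwordB s (l - k + 2) * s 1 * rwordB s (l - k + 2) = s (l - k + 1) := by
      rw [e2, mul_assoc, r_sq H (l - k + 2) (by omega), mul_one]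
    have e3 := (rs H l (l - k + 1) (by omega) (by omega) hln).eq
    rw [show l - (l - k + 1) = k - 1 from by omega] at e3
    have hB : rwordB s l * s (l - k + 1) * rwordB s l = s (k - 1) := by
      rw [e3, mul_assoc, r_sq H l hln, mul_one]
    calc rwordB s k * rwordB s 1 * rwordB s 2 * rwordB s 1 * rwordB s k * rwordB s l *
          rwordB s (l - k + 2) * rwordB s 1 * rwordB s 2 * rwordB s 1 *
          rwordB s (l - k + 2) * rwordB s l
        = (rwordB s k * (rwordB s 1 * rwordB s 2 * rwordB s 1) * rwordB s k) *
          (rwordB s l * (rwordB s (l - k + 2) * (rwordB s 1 * rwordB s 2 * rwordB s 1) *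
            rwordB s (l - k + 2)) * rwordB s l) := by group
      _ = (rwordB s k * s 1 * rwordB s k) *
          (rwordB s l * (rwordB s (l - k + 2) * s 1 * rwordB s (l - k + 2)) * rwordB s l) := by
          rw [r121 H (by omega)]
      _ = s (k - 1) * (rwordB s l * s (l - k + 1) * rwordB s l) := by rw [hA, hin]
      _ = s (k - 1) * s (k - 1) := by rw [hB]
      _ = 1 := H.sq (k - 1) (by omega)
end

section
/- Let n > 3, let G be a group, and let r̄_2, r_2, …, r_n ∈ G satisfy the relations (Rd1)–(Rd10). Then the elements s_0' := r̄_2 and s_i := r_{i+1} r_2 r_{i+1} for i ∈ [1,n-1] satisfy the type D Coxeter relations: s_i^2 = 1 for i ∈ [1,n-1]; (s_0')^2 = 1; (s_0' s_2)^3 = 1; (s_i s_{i+1})^3 = 1 for i ∈ [1,n-2]; (s_0' s_i)^2 = 1 for i ∈ {1} ∪ [3,n-1]; and (s_i s_j)^2 = 1 for i ∈ [1,n-1] and j ∈ [i+2,n-1]. -/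
lemma pw2 {G : Type*} [Monoid G] (x : G) : x^2 = x*x := by rw [pow_succ, pow_one]
lemma pw3 {G : Type*} [Monoid G] (x : G) : x^3 = x*x*x := by rw [pow_succ, pow_succ, pow_one]
lemma pw4 {G : Type*} [Monoid G] (x : G) : x^4 = x*x*x*x := by
  rw [pow_succ, pow_succ, pow_succ, pow_one]

lemma aux_invol_conj {G : Type*} [Group G] {t z : G} (ht : t*t = 1) (hz : z*z = 1) :
    (t*z*t)*(t*z*t) = 1 := by
  calc (t*z*t)*(t*z*t) = t*z*(t*t)*z*t := by group
    _ = t*(z*z)*t := by rw [ht]; group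
    _ = t*t := by rw [hz]; group
    _ = 1 := ht

lemma aux_conj_pow {G : Type*} [Group G] {u y : G} (hu : u*u = 1) :
    ∀ m : ℕ, (u*y*u)^m = u*y^m*u
  | 0 => by rw [pow_zero, pow_zero, mul_one]; exact hu.symm
  | (m+1) => by
      rw [pow_succ, aux_conj_pow hu m]
      calc u*y^m*u*(u*y*u) = u*y^m*(u*u)*y*u := by group
        _ = u*y^(m+1)*u := by rw [hu, pow_succ]; group

lemma braid2core {G : Type*} [Group G] {z u v : G}
    (hz : z*z = 1) (hu : u*u = 1) (hv : v*v = 1)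
    (h3 : (z*u)^3 = 1) (h4 : (z*v)^4 = 1)
    (h8 : u*z*v*z*v*u*v = 1)
    (h9 : (u*z)^2*v*u*v*z*v = 1) :
    ((u*z*u)*(v*z*v))^3 = 1 := by
  have hzi : z⁻¹ = z := inv_eq_of_mul_eq_one_right hz
  have hui : u⁻¹ = u := inv_eq_of_mul_eq_one_right hu
  have hvi : v⁻¹ = v := inv_eq_of_mul_eq_one_right hv
  have huz3 : (u*z)^3 = 1 := by
    calc (u*z)^3 = u*(z*u)^3*u⁻¹ := by simp only [pw3]; group
      _ = 1 := by rw [h3]; group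
  have hE : v*z*v = z*u*v*u := by
    have h1 : v*z*v = (u*z)⁻¹ * (u*z*v*z*v*u*v) * (u*v)⁻¹ := by group
    rw [h8, mul_one] at h1
    rw [h1]
    simp [mul_inv_rev, hzi, hui, hvi, mul_assoc]
  have hG : v*u*v*z*v = u*z := by
    have h9' : (u*z)^2 * (v*u*v*z*v) = 1 := by
      calc (u*z)^2 * (v*u*v*z*v) = (u*z)^2*v*u*v*z*v := by simp only [pw2]; group
        _ = 1 := h9
    have h1 : v*u*v*z*v = ((u*z)^2)⁻¹ * ((u*z)^2 * (v*u*v*z*v)) := by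
      simp only [pw2]; group
    rw [h9', mul_one] at h1
    rw [h1]
    calc ((u*z)^2)⁻¹ = (u*z) * ((u*z)^3)⁻¹ := by simp only [pw2, pw3]; group
      _ = u*z := by rw [huz3]; group
  have hVU : v*u = u*z*v*z*v := by
    calc v*u = (v*u*v*z*v) * (v*z*v)⁻¹ := by group
      _ = (u*z) * (v*z*v)⁻¹ := by rw [hG]
      _ = u*z*v*z*v := by simp [mul_inv_rev, hzi, hvi, mul_assoc]
  have hvz4 : (v*z)^4 = 1 := by
    calc (v*z)^4 = z⁻¹*(z*v)^4*z := by simp only [pw4]; group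
      _ = 1 := by rw [h4]; group
  have hcm : v*z*v*z = z*v*z*v := by
    have h1 : v*z*v*z = z⁻¹*v⁻¹*z⁻¹*v⁻¹*((v*z)^4) := by simp only [pw4]; group
    rw [hvz4, mul_one] at h1
    rw [h1, hzi, hvi]
  have hKey : v*(u*z*u)*v = u*z*u := by
    calc v*(u*z*u)*v = (v*u)*(z*u*v) := by group
      _ = (u*z*v*z*v)*(z*u*v) := by rw [hVU]
      _ = u*z*(v*z*v*z)*(u*v) := by group
      _ = u*z*(z*v*z*v)*(u*v) := by rw [hcm]
      _ = u*(z*z)*(v*z*v)*(u*v) := by group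
      _ = u*(v*z*v)*(u*v) := by rw [hz]; group
      _ = u*(z*u*v*u)*(u*v) := by rw [hE]
      _ = u*z*u*v*(u*u)*v := by group
      _ = u*z*u*(v*v) := by rw [hu]; group
      _ = u*z*u := by rw [hv]; group
  have hzuzu : z*u*z*u = u*z := by
    have h1 : z*u*z*u = ((z*u)^3)*u⁻¹*z⁻¹ := by simp only [pw3]; group
    rw [h3] at h1
    rw [h1, hui, hzi]; group
  have hB : (u*z*u)*(v*z*v) = u*(u*z*v)*u := by
    calc (u*z*u)*(v*z*v) = u*z*u*(v*z*v) := by group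
      _ = u*z*u*(z*u*v*u) := by rw [hE]
      _ = u*((z*u*z*u)*v)*u := by group
      _ = u*((u*z)*v)*u := by rw [hzuzu]
      _ = u*(u*z*v)*u := by group
  have hY2 : u*z*v = v*u*v*z := by
    calc u*z*v = (v*u*v*z*v)*v := by rw [hG]
      _ = v*u*v*z*(v*v) := by group
      _ = v*u*v*z := by rw [hv]; group
  have hY3 : (u*z*v)^3 = 1 := by
    calc (u*z*v)^3 = (v*u*v*z)^3 := by rw [hY2]
      _ = v*u*(v*z*v)*u*(v*z*v)*u*(v*z) := by simp only [pw3]; group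
      _ = v*u*(z*u*v*u)*u*(z*u*v*u)*u*(v*z) := by rw [hE]
      _ = v*u*z*u*v*(u*u)*z*u*v*(u*u)*(v*z) := by group
      _ = (v*(u*z*u)*v)*z*u*(v*v)*z := by rw [hu]; group
      _ = (v*(u*z*u)*v)*(z*u*z) := by rw [hv]; group
      _ = (u*z*u)*(z*u*z) := by rw [hKey]
      _ = (u*z)^3 := by simp only [pw3]; group
      _ = 1 := huz3
  calc ((u*z*u)*(v*z*v))^3 = (u*(u*z*v)*u)^3 := by rw [hB]
    _ = u*(u*z*v)^3*u := aux_conj_pow hu 3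
    _ = u*1*u := by rw [hY3]
    _ = 1 := by rw [mul_one]; exact hu

lemma braidhighcore {G : Type*} [Group G] {z u t w : G}
    (hz : z*z = 1) (hu : u*u = 1) (ht : t*t = 1)
    (h3 : (z*u)^3 = 1)
    (h10 : t*w*z*w*t*u*z*u = 1) :
    ((w*z*w)*(t*z*t))^3 = 1 := by
  have hzi : z⁻¹ = z := inv_eq_of_mul_eq_one_right hz
  have hui : u⁻¹ = u := inv_eq_of_mul_eq_one_right hu
  have huz3 : (u*z)^3 = 1 := by
    calc (u*z)^3 = u*(z*u)^3*u⁻¹ := by simp only [pw3]; group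
      _ = 1 := by rw [h3]; group
  have h10' : (t*(w*z*w)*t)*(u*z*u) = 1 := by
    calc (t*(w*z*w)*t)*(u*z*u) = t*w*z*w*t*u*z*u := by group
      _ = 1 := h10
  have e1 : t*(w*z*w)*t = u*z*u := by
    have h := eq_inv_of_mul_eq_one_left h10'
    rw [h]; simp [mul_inv_rev, hzi, hui, mul_assoc]
  have e2 : w*z*w = t*(u*z*u)*t := by
    calc w*z*w = (t*t)*(w*z*w)*(t*t) := by rw [ht]; group
      _ = t*(t*(w*z*w)*t)*t := by group
      _ = t*(u*z*u)*t := by rw [e1]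
  have e3 : (t*(u*z*u)*t)*(t*z*t) = t*((u*z)*(u*z))*t := by
    calc (t*(u*z*u)*t)*(t*z*t) = t*(u*z*u)*(t*t)*z*t := by group
      _ = t*(u*z*u)*1*z*t := by rw [ht]
      _ = t*((u*z)*(u*z))*t := by group
  have e4 : ((u*z)*(u*z))^3 = ((u*z)^3)*((u*z)^3) := by
    simp only [pw3]; group
  calc ((w*z*w)*(t*z*t))^3 = ((t*(u*z*u)*t)*(t*z*t))^3 := by rw [e2]
    _ = (t*((u*z)*(u*z))*t)^3 := by rw [e3]
    _ = t*((u*z)*(u*z))^3*t := aux_conj_pow ht 3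
    _ = t*(((u*z)^3)*((u*z)^3))*t := by rw [e4]
    _ = t*(1*(1:G))*t := by rw [huz3]
    _ = t*t := by rw [mul_one, mul_one]
    _ = 1 := ht

lemma commcore {G : Type*} [Group G] {z t m w : G}
    (hz : z*z = 1) (ht : t*t = 1) (hm : m*m = 1) (hw : w*w = 1)
    (h5m : (z*m)^4 = 1)
    (h10 : t*m*z*m*t*w*z*w = 1) :
    ((w*z*w)*(t*z*t))^2 = 1 := by
  have hzi : z⁻¹ = z := inv_eq_of_mul_eq_one_right hz
  have hmi : m⁻¹ = m := inv_eq_of_mul_eq_one_right hm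
  have hwi : w⁻¹ = w := inv_eq_of_mul_eq_one_right hw
  have h10' : (t*(m*z*m)*t)*(w*z*w) = 1 := by
    calc (t*(m*z*m)*t)*(w*z*w) = t*m*z*m*t*w*z*w := by group
      _ = 1 := h10
  have e1 : t*(m*z*m)*t = w*z*w := by
    have h := eq_inv_of_mul_eq_one_left h10'
    rw [h]; simp [mul_inv_rev, hzi, hwi, mul_assoc]
  have e1' : t*(w*z*w)*t = m*z*m := by
    calc t*(w*z*w)*t = t*(t*(m*z*m)*t)*t := by rw [e1]
      _ = (t*t)*(m*z*m)*(t*t) := by group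
      _ = m*z*m := by rw [ht]; group
  have hc : z*(m*z*m)*z = m*z*m := by
    have h' : (z*(m*z*m)*z)*(m*z*m) = 1 := by
      calc (z*(m*z*m)*z)*(m*z*m) = (z*m)^4 := by simp only [pw4]; group
        _ = 1 := h5m
    have h := eq_inv_of_mul_eq_one_left h'
    rw [h]; simp [mul_inv_rev, hzi, hmi, mul_assoc]
  have key : (t*z*t)*((w*z*w)*(t*z*t)) = w*z*w := by
    calc (t*z*t)*((w*z*w)*(t*z*t)) = t*z*(t*(w*z*w)*t)*z*t := by group
      _ = t*z*(m*z*m)*z*t := by rw [e1']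
      _ = t*(z*(m*z*m)*z)*t := by group
      _ = t*(m*z*m)*t := by rw [hc]
      _ = w*z*w := e1
  calc ((w*z*w)*(t*z*t))^2 = (w*z*w)*((t*z*t)*((w*z*w)*(t*z*t))) := by
        simp only [pw2]; group
    _ = (w*z*w)*(w*z*w) := by rw [key]
    _ = 1 := aux_invol_conj hw hz

theorem stmt17 (n : ℕ) (hn : 3 < n) (G : Type*) [Group G] (rb : G) (r : ℕ → G)
    (hRd1 : rb * rb = 1)
    (hRd2 : ∀ k, 2 ≤ k → k ≤ n → r k * r k = 1)
    (hRd3 : (rb * r 2) ^ 2 = 1)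
    (hRd4 : (r 2 * r 3) ^ 3 = 1)
    (hRd5 : ∀ k, 4 ≤ k → k ≤ n → (r 2 * r k) ^ 4 = 1)
    (hRd6 : (rb * r 3 * r 2 * r 3) ^ 3 = 1)
    (hRd7 : ∀ k, 4 ≤ k → k ≤ n → (rb * r k * r 2 * r k) ^ 2 = 1)
    (hRd8 : ∀ k, 3 ≤ k → k ≤ n - 1 →
      r k * r (k - 1) * r (k + 1) * r 2 * r (k + 1) * r k * r (k + 1) = 1)
    (hRd9 : ∀ k, 3 ≤ k → k ≤ n - 1 →
      (r k * r (k - 1)) ^ 2 * r (k + 1) * r 3 * r (k + 1) * r (k - 1) * r (k + 1) = 1)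
    (hRd10 : ∀ l k, 4 ≤ l → l ≤ n → 3 ≤ k → k ≤ l - 2 →
      r l * r (l - k + 2) * r 2 * r (l - k + 2) * r l * r k * r 2 * r k = 1) :
    let s : ℕ → G := fun i => r (i + 1) * r 2 * r (i + 1)
    (∀ i, 1 ≤ i → i ≤ n - 1 → s i * s i = 1) ∧
    (rb * rb = 1) ∧
    ((rb * s 2) ^ 3 = 1) ∧
    (∀ i, 1 ≤ i → i ≤ n - 2 → (s i * s (i + 1)) ^ 3 = 1) ∧
    (∀ i, i = 1 ∨ (3 ≤ i ∧ i ≤ n - 1) → (rb * s i) ^ 2 = 1) ∧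
    (∀ i j, 1 ≤ i → i ≤ n - 1 → i + 2 ≤ j → j ≤ n - 1 → (s i * s j) ^ 2 = 1) := by
  intro s
  have hz : r 2 * r 2 = 1 := hRd2 2 le_rfl (by omega)
  have hu : r 3 * r 3 = 1 := hRd2 3 (by omega) (by omega)
  refine ⟨?_, hRd1, ?_, ?_, ?_, ?_⟩
  · -- s i involutions
    intro i h1 h2
    have hri : r (i+1) * r (i+1) = 1 := hRd2 (i+1) (by omega) (by omega)
    show (r (i+1) * r 2 * r (i+1)) * (r (i+1) * r 2 * r (i+1)) = 1
    exact aux_invol_conj hri hz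
  · -- (rb * s 2)^3
    show (rb * (r 3 * r 2 * r 3))^3 = 1
    have e : rb * (r 3 * r 2 * r 3) = rb * r 3 * r 2 * r 3 := by group
    rw [e]; exact hRd6
  · -- braid relations
    intro i h1 h2
    obtain rfl | hi2 : i = 1 ∨ 2 ≤ i := by omega
    · show ((r 2 * r 2 * r 2) * (r 3 * r 2 * r 3))^3 = 1
      have hs1 : r 2 * r 2 * r 2 = r 2 := by rw [hz, one_mul]
      rw [hs1]
      have e : r 2 * (r 3 * r 2 * r 3) = (r 2 * r 3) * (r 2 * r 3) := by group
      rw [e]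
      have e2 : ((r 2 * r 3) * (r 2 * r 3))^3 = ((r 2 * r 3)^3)*((r 2 * r 3)^3) := by
        simp only [pw3]; group
      rw [e2, hRd4, mul_one]
    obtain rfl | hi3 : i = 2 ∨ 3 ≤ i := by omega
    · have hv : r 4 * r 4 = 1 := hRd2 4 (by omega) (by omega)
      have h8 := hRd8 3 le_rfl (by omega)
      norm_num at h8
      have h9 := hRd9 3 le_rfl (by omega)
      norm_num at h9
      have h4' := hRd5 4 le_rfl (by omega)
      show ((r 3 * r 2 * r 3) * (r 4 * r 2 * r 4))^3 = 1
      exact braid2core hz hu hv hRd4 h4' h8 h9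
    · have ht : r (i+2) * r (i+2) = 1 := hRd2 (i+2) (by omega) (by omega)
      have h10 := hRd10 (i+2) 3 (by omega) (by omega) (by omega) (by omega)
      have e : i+2-3+2 = i+1 := by omega
      rw [e] at h10
      show ((r (i+1) * r 2 * r (i+1)) * (r (i+2) * r 2 * r (i+2)))^3 = 1
      exact braidhighcore hz hu ht hRd4 h10
  · -- (rb * s i)^2
    intro i hi
    rcases hi with rfl | ⟨h3i, hin⟩
    · show (rb * (r 2 * r 2 * r 2))^2 = 1
      have hs1 : r 2 * r 2 * r 2 = r 2 := by rw [hz, one_mul]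
      rw [hs1]
      exact hRd3
    · have h7 := hRd7 (i+1) (by omega) (by omega)
      show (rb * (r (i+1) * r 2 * r (i+1)))^2 = 1
      have e : rb * (r (i+1) * r 2 * r (i+1)) = rb * r (i+1) * r 2 * r (i+1) := by group
      rw [e]; exact h7
  · -- commutation
    intro i j h1 h2 h3 h4
    obtain rfl | hi2 : i = 1 ∨ 2 ≤ i := by omega
    · have h5 := hRd5 (j+1) (by omega) (by omega)
      show ((r 2 * r 2 * r 2) * (r (j+1) * r 2 * r (j+1)))^2 = 1
      have hs1 : r 2 * r 2 * r 2 = r 2 := by rw [hz, one_mul]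
      rw [hs1]
      have e : r 2 * (r (j+1) * r 2 * r (j+1)) = (r 2 * r (j+1)) * (r 2 * r (j+1)) := by
        group
      rw [e]
      have e2 : ((r 2 * r (j+1)) * (r 2 * r (j+1)))^2 = (r 2 * r (j+1))^4 := by
        simp only [pw2, pw4]; group
      rw [e2]; exact h5
    · have h10 := hRd10 (j+1) (i+1) (by omega) (by omega) (by omega) (by omega)
      have e : j+1-(i+1)+2 = j-i+2 := by omega
      rw [e] at h10
      have h5m := hRd5 (j-i+2) (by omega) (by omega)
      have hm := hRd2 (j-i+2) (by omega) (by omega)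
      have ht := hRd2 (j+1) (by omega) (by omega)
      have hw := hRd2 (i+1) (by omega) (by omega)
      show ((r (i+1) * r 2 * r (i+1)) * (r (j+1) * r 2 * r (j+1)))^2 = 1
      exact commcore hz ht hm hw h5m h10
end
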